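/- arXiv:1410.7188 — 8 statements merged into one kernel-verified Lean document; each statement's English description precedes it below -/
import Mathlib

section
/- Let P be a positive semidefinite n×n complex matrix of rank r, and suppose P = ∑_{i=1}^r v_i v_i* = ∑_{i=1}^m w_i w_i* are two decompositions into rank-one matrices with v_i, w_i ∈ ℂ^n. Then there exists an m×r matrix U with U*U = I_r such that w_i = ∑_{j=1}^r U_{ij} v_j for all 1 ≤ i ≤ m. -/
open Matrix
open scoped ComplexOrder

private lemma aux_tc {α β : Type*} [Fintype β] (M : Matrix α β ℂ) :
    Mᵀᴴ * Mᵀ = (M * Mᴴ)ᵀ := by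
  ext a b
  simp [Matrix.mul_apply, mul_comm]

theorem stmt_0 (n r m : ℕ) (P : Matrix (Fin n) (Fin n) ℂ)
    (hP : P.PosSemidef) (hrank : P.rank = r)
    (v : Fin r → Fin n → ℂ) (w : Fin m → Fin n → ℂ)
    (hv : P = ∑ i, Matrix.vecMulVec (v i) (star (v i)))
    (hw : P = ∑ i, Matrix.vecMulVec (w i) (star (w i))) :
    ∃ U : Matrix (Fin m) (Fin r) ℂ, Uᴴ * U = 1 ∧ ∀ i, w i = ∑ j, U i j • v j := by
  classical
  set A : Matrix (Fin n) (Fin r) ℂ := Matrix.of fun k j => v j k with hAdef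
  set B : Matrix (Fin n) (Fin m) ℂ := Matrix.of fun k i => w i k with hBdef
  have hA : P = A * Aᴴ := by
    rw [hv]; ext k l
    simp [Matrix.sum_apply, Matrix.mul_apply, Matrix.vecMulVec_apply, hAdef, mul_comm]
  have hB : P = B * Bᴴ := by
    rw [hw]; ext k l
    simp [Matrix.sum_apply, Matrix.mul_apply, Matrix.vecMulVec_apply, hBdef, mul_comm]
  set G : Matrix (Fin r) (Fin r) ℂ := Aᴴ * A with hGdef
  have hGrank : G.rank = r := by
    rw [hGdef, Matrix.rank_conjTranspose_mul_self]
    have := Matrix.rank_self_mul_conjTranspose A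
    rw [← hA, hrank] at this
    exact this.symm
  -- G is invertible
  have hGunit : IsUnit G := by
    rw [← Matrix.mulVec_injective_iff_isUnit]
    rw [show (Matrix.mulVec G) = G.mulVecLin from rfl]
    rw [LinearMap.injective_iff_surjective_of_finrank_eq_finrank (by simp)]
    rw [← LinearMap.range_eq_top]
    apply Submodule.eq_top_of_finrank_eq
    simpa [Matrix.rank] using hGrank
  have hGdet : IsUnit G.det := (Matrix.isUnit_iff_isUnit_det G).mp hGunit
  have hGinv : G * G⁻¹ = 1 := Matrix.mul_nonsing_inv G hGdet
  have hGinv' : G⁻¹ * G = 1 := Matrix.nonsing_inv_mul G hGdet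
  have hGherm : Gᴴ = G := by rw [hGdef]; simp [Matrix.conjTranspose_mul]
  have hGinvherm : (G⁻¹)ᴴ = G⁻¹ := by
    rw [Matrix.conjTranspose_nonsing_inv, hGherm]
  -- projection Q = A G⁻¹ Aᴴ fixes B
  have hQP : A * G⁻¹ * Aᴴ * (A * Aᴴ) = A * Aᴴ := by
    calc A * G⁻¹ * Aᴴ * (A * Aᴴ) = A * (G⁻¹ * (Aᴴ * A)) * Aᴴ := by
          simp only [Matrix.mul_assoc]
      _ = A * Aᴴ := by rw [← hGdef, hGinv', Matrix.mul_one]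
  have hBB : B * Bᴴ = A * Aᴴ := by rw [← hA, ← hB]
  have e2 : A * Aᴴ * (A * (G⁻¹ * Aᴴ)) = A * Aᴴ := by
    calc A * Aᴴ * (A * (G⁻¹ * Aᴴ)) = A * ((Aᴴ * A) * G⁻¹) * Aᴴ := by
          simp only [Matrix.mul_assoc]
      _ = A * Aᴴ := by rw [← hGdef, hGinv, Matrix.mul_one]
  have hQB : A * G⁻¹ * Aᴴ * B = B := by
    have key : (A * G⁻¹ * Aᴴ * B - B) * (A * G⁻¹ * Aᴴ * B - B)ᴴ = 0 := by
      simp only [Matrix.conjTranspose_sub, Matrix.conjTranspose_mul, hGinvherm,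
        Matrix.conjTranspose_conjTranspose, Matrix.sub_mul, Matrix.mul_sub]
      have e1 : A * G⁻¹ * Aᴴ * B * (Bᴴ * (A * (G⁻¹ * Aᴴ))) = A * Aᴴ := by
        calc A * G⁻¹ * Aᴴ * B * (Bᴴ * (A * (G⁻¹ * Aᴴ)))
            = (A * G⁻¹ * Aᴴ * (B * Bᴴ)) * (A * (G⁻¹ * Aᴴ)) := by
              simp only [Matrix.mul_assoc]
          _ = (A * G⁻¹ * Aᴴ * (A * Aᴴ)) * (A * (G⁻¹ * Aᴴ)) := by rw [hBB]
          _ = A * Aᴴ * (A * (G⁻¹ * Aᴴ)) := by rw [hQP]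
          _ = A * Aᴴ := e2
      have e3 : B * (Bᴴ * (A * (G⁻¹ * Aᴴ))) = A * Aᴴ := by
        calc B * (Bᴴ * (A * (G⁻¹ * Aᴴ))) = (B * Bᴴ) * (A * (G⁻¹ * Aᴴ)) := by
              simp only [Matrix.mul_assoc]
          _ = A * Aᴴ * (A * (G⁻¹ * Aᴴ)) := by rw [hBB]
          _ = A * Aᴴ := e2
      have e4 : A * G⁻¹ * Aᴴ * B * Bᴴ = A * Aᴴ := by
        calc A * G⁻¹ * Aᴴ * B * Bᴴ = A * G⁻¹ * Aᴴ * (B * Bᴴ) := by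
              simp only [Matrix.mul_assoc]
          _ = A * G⁻¹ * Aᴴ * (A * Aᴴ) := by rw [hBB]
          _ = A * Aᴴ := hQP
      rw [e1, e3, e4, hBB]
      abel
    exact sub_eq_zero.mp (Matrix.self_mul_conjTranspose_eq_zero.mp key)
  have hAM : A * (G⁻¹ * Aᴴ * B) = B := by
    simpa only [← Matrix.mul_assoc] using hQB
  refine ⟨(G⁻¹ * Aᴴ * B)ᵀ, ?_, ?_⟩
  · -- UᴴU = 1
    have hMM : (G⁻¹ * Aᴴ * B) * (G⁻¹ * Aᴴ * B)ᴴ = 1 := by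
      simp only [Matrix.conjTranspose_mul, hGinvherm, Matrix.conjTranspose_conjTranspose]
      calc G⁻¹ * Aᴴ * B * (Bᴴ * (A * G⁻¹)) = G⁻¹ * (Aᴴ * ((B * Bᴴ) * A)) * G⁻¹ := by
            simp only [Matrix.mul_assoc]
        _ = G⁻¹ * (Aᴴ * ((A * Aᴴ) * A)) * G⁻¹ := by rw [hBB]
        _ = (G⁻¹ * G) * ((G * G⁻¹)) := by
            rw [hGdef]; simp only [Matrix.mul_assoc]
        _ = 1 := by rw [hGinv, hGinv', Matrix.one_mul]
    rw [aux_tc, hMM, Matrix.transpose_one]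
  · -- w i = ∑ j U i j • v j
    intro i
    funext k
    have hk : (A * (G⁻¹ * Aᴴ * B)) k i = B k i := congrFun (congrFun hAM k) i
    rw [Matrix.mul_apply] at hk
    calc w i k = B k i := rfl
      _ = ∑ j, A k j * (G⁻¹ * Aᴴ * B) j i := hk.symm
      _ = ∑ j, (G⁻¹ * Aᴴ * B)ᵀ i j * v j k := by
          refine Finset.sum_congr rfl fun j _ => ?_
          rw [Matrix.transpose_apply, mul_comm]
          rfl
      _ = (∑ j, (G⁻¹ * Aᴴ * B)ᵀ i j • v j) k := by
          simp [Finset.sum_apply]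
end

section
/- Let A, B be bounded operators on a Hilbert space H with B*B ≤ A*A (in the Loewner order). Then there exists a bounded operator C from the closure of the range of A to the closure of the range of B with ‖C‖ ≤ 1 and C∘A = B. -/
/-- **Douglas' factorization theorem.** If `B*B ≤ A*A` in the Loewner order, then there is a
contraction `C` from the closure of the range of `A` to the closure of the range of `B`
with `C ∘ A = B`. -/
theorem stmt_1 {H : Type*} [NormedAddCommGroup H] [InnerProductSpace ℂ H] [CompleteSpace H]
    (A B : H →L[ℂ] H)
    (hle : ((ContinuousLinearMap.adjoint A) ∘L A - (ContinuousLinearMap.adjoint B) ∘L B).IsPositive) :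
    ∃ C : (LinearMap.range (A : H →ₗ[ℂ] H)).topologicalClosure →L[ℂ] (LinearMap.range (B : H →ₗ[ℂ] H)).topologicalClosure,
      ‖C‖ ≤ 1 ∧ ∀ x : H,
        (C ⟨A x, Submodule.le_topologicalClosure _ ⟨x, rfl⟩⟩ : H) = B x := by
  classical
  have hnorm : ∀ x : H, ‖B x‖ ≤ ‖A x‖ := by
    intro x
    have h := hle.2 x
    rw [ContinuousLinearMap.reApplyInnerSelf_apply] at h
    simp only [ContinuousLinearMap.sub_apply, ContinuousLinearMap.comp_apply,
      inner_sub_left, map_sub] at h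
    rw [ContinuousLinearMap.adjoint_inner_left, ContinuousLinearMap.adjoint_inner_left,
      inner_self_eq_norm_sq, inner_self_eq_norm_sq, sub_nonneg] at h
    nlinarith [norm_nonneg (B x), norm_nonneg (A x)]
  have key : ∀ x y : H, A x = A y → B x = B y := by
    intro x y h
    have h2 : ‖B x - B y‖ ≤ ‖A x - A y‖ := by
      have := hnorm (x - y); simpa [map_sub] using this
    rw [h, sub_self, norm_zero] at h2
    exact sub_eq_zero.mp (norm_le_zero_iff.mp h2)
  set SA := (LinearMap.range (A : H →ₗ[ℂ] H)).topologicalClosure with hSA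
  set SB := (LinearMap.range (B : H →ₗ[ℂ] H)).topologicalClosure with hSB
  have memB : ∀ x : H, B x ∈ SB := fun x =>
    Submodule.le_topologicalClosure _ ⟨x, rfl⟩
  -- the choice of preimage
  have hch : ∀ v : LinearMap.range (A : H →ₗ[ℂ] H), A (Classical.choose v.2) = (v : H) :=
    fun v => Classical.choose_spec v.2
  let f : (LinearMap.range (A : H →ₗ[ℂ] H)) →ₗ[ℂ] SB :=
    { toFun := fun v => ⟨B (Classical.choose v.2), memB _⟩
      map_add' := by
        intro v w
        ext
        have : A (Classical.choose (v + w).2) =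
            A (Classical.choose v.2 + Classical.choose w.2) := by
          rw [map_add, hch, hch, hch]; rfl
        simpa [map_add] using key _ _ this
      map_smul' := by
        intro c v
        ext
        have : A (Classical.choose (c • v).2) = A (c • Classical.choose v.2) := by
          rw [map_smul, hch, hch]; rfl
        simpa [map_smul] using key _ _ this }
  have hf_bound : ∀ v : LinearMap.range (A : H →ₗ[ℂ] H), ‖f v‖ ≤ 1 * ‖v‖ := by
    intro v
    have : ‖f v‖ = ‖B (Classical.choose v.2)‖ := rfl
    rw [this, one_mul]
    calc ‖B (Classical.choose v.2)‖ ≤ ‖A (Classical.choose v.2)‖ := hnorm _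
      _ = ‖(v : H)‖ := by rw [hch]
      _ = ‖v‖ := rfl
  let fc : (LinearMap.range (A : H →ₗ[ℂ] H)) →L[ℂ] SB := f.mkContinuous 1 hf_bound
  -- the inclusion into the closure
  let e₀ : (LinearMap.range (A : H →ₗ[ℂ] H)) →ₗ[ℂ] SA :=
    Submodule.inclusion (Submodule.le_topologicalClosure _)
  have he₀ : ∀ v : LinearMap.range (A : H →ₗ[ℂ] H), ‖e₀ v‖ = ‖v‖ := fun v => rfl
  let e : (LinearMap.range (A : H →ₗ[ℂ] H)) →L[ℂ] SA := e₀.mkContinuous 1 (by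
    intro v; rw [he₀, one_mul])
  have h_dense : DenseRange e := by
    intro y
    rw [mem_closure_iff_seq_limit]
    have hy : (y : H) ∈ closure ((LinearMap.range (A : H →ₗ[ℂ] H) : Set H)) := y.2
    rw [mem_closure_iff_seq_limit] at hy
    obtain ⟨u, hu, hlim⟩ := hy
    refine ⟨fun n => e ⟨u n, hu n⟩, fun n => ⟨⟨u n, hu n⟩, rfl⟩, ?_⟩
    rw [Metric.tendsto_atTop] at hlim ⊢
    intro ε hε
    obtain ⟨N, hN⟩ := hlim ε hε
    exact ⟨N, fun n hn => by simpa [e, e₀, Subtype.dist_eq] using hN n hn⟩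
  have h_unif : ∀ v : LinearMap.range (A : H →ₗ[ℂ] H), ‖v‖ ≤ (1 : NNReal) * ‖e v‖ := by
    intro v; simp [e, e₀]
  have h_e : IsUniformInducing e :=
    (ContinuousLinearMap.isUniformEmbedding_of_bound e h_unif).isUniformInducing
  haveI : CompleteSpace SB :=
    (Submodule.isClosed_topologicalClosure _).completeSpace_coe
  refine ⟨fc.extend e, ?_, ?_⟩
  · have := ContinuousLinearMap.opNorm_extend_le fc h_dense h_unif
    have hfc : ‖fc‖ ≤ 1 := f.mkContinuous_norm_le zero_le_one hf_bound
    calc ‖fc.extend e‖ ≤ (1 : NNReal) * ‖fc‖ := this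
      _ ≤ 1 := by simpa using hfc
  · intro x
    have hx : (⟨A x, Submodule.le_topologicalClosure _ ⟨x, rfl⟩⟩ : SA)
        = e ⟨A x, ⟨x, rfl⟩⟩ := rfl
    rw [hx, ContinuousLinearMap.extend_eq fc h_dense h_e]
    have : fc ⟨A x, ⟨x, rfl⟩⟩ = ⟨B (Classical.choose (⟨A x, ⟨x, rfl⟩⟩ : LinearMap.range (A : H →ₗ[ℂ] H)).2), memB _⟩ := rfl
    rw [this]
    exact key _ _ (hch ⟨A x, ⟨x, rfl⟩⟩)
end

section
/- Let H and K be complex Hilbert spaces, a ∈ B(H) positive, b ∈ B(K) positive, and x ∈ B(K,H). Then the block operator [[a, x],[x*, b]] on H ⊕ K is positive if and only if |⟨x k, h⟩| ≤ √(⟨a h, h⟩ · ⟨b k, k⟩) for all h ∈ H and k ∈ K. -/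
open ContinuousLinearMap

/-- The block operator `[[a, x], [x*, b]]` on the Hilbert space direct sum `H ⊕ K`,
acting by `(h, k) ↦ (a h + x k, x* h + b k)`. -/
noncomputable def blockOp {H K : Type*} [NormedAddCommGroup H] [InnerProductSpace ℂ H]
    [NormedAddCommGroup K] [InnerProductSpace ℂ K] [CompleteSpace H] [CompleteSpace K]
    (a : H →L[ℂ] H) (b : K →L[ℂ] K) (x : K →L[ℂ] H) :
    WithLp 2 (H × K) →L[ℂ] WithLp 2 (H × K) :=
  (((WithLp.prodContinuousLinearEquiv 2 ℂ H K).symm : (H × K) →L[ℂ] WithLp 2 (H × K)) ∘L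
    (((a ∘L fst ℂ H K) + (x ∘L snd ℂ H K)).prod
      (((adjoint x) ∘L fst ℂ H K) + (b ∘L snd ℂ H K)))) ∘L
    ((WithLp.prodContinuousLinearEquiv 2 ℂ H K) : WithLp 2 (H × K) →L[ℂ] (H × K))

lemma inner_blockOp {H K : Type*} [NormedAddCommGroup H] [InnerProductSpace ℂ H]
    [NormedAddCommGroup K] [InnerProductSpace ℂ K] [CompleteSpace H] [CompleteSpace K]
    (a : H →L[ℂ] H) (b : K →L[ℂ] K) (x : K →L[ℂ] H) (z : WithLp 2 (H × K)) :
    (inner ℂ (blockOp a b x z) z : ℂ) =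
      inner ℂ (a z.fst) z.fst + inner ℂ (x z.snd) z.fst
        + (starRingEnd ℂ) (inner ℂ (x z.snd) z.fst) + inner ℂ (b z.snd) z.snd := by
  simp [blockOp, WithLp.prod_inner_apply, inner_add_left, adjoint_inner_left,
    ← inner_conj_symm z.snd]
  ring

theorem stmt_2 {H K : Type*} [NormedAddCommGroup H] [InnerProductSpace ℂ H]
    [NormedAddCommGroup K] [InnerProductSpace ℂ K] [CompleteSpace H] [CompleteSpace K]
    (a : H →L[ℂ] H) (b : K →L[ℂ] K) (x : K →L[ℂ] H)
    (ha : a.IsPositive) (hb : b.IsPositive) :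
    (blockOp a b x).IsPositive ↔
      ∀ (h : H) (k : K), ‖(inner ℂ (x k) h : ℂ)‖ ≤
        Real.sqrt ((inner ℂ (a h) h : ℂ).re * (inner ℂ (b k) k : ℂ).re) := by
  rw [isPositive_iff_complex]
  constructor
  · intro hpos h k
    set A : ℝ := (inner ℂ (a h) h : ℂ).re with hA
    set B : ℝ := (inner ℂ (b k) k : ℂ).re with hB
    have hA0 : 0 ≤ A := by
      have := ha.2 h; rwa [reApplyInnerSelf] at this
    have hB0 : 0 ≤ B := by
      have := hb.2 k; rwa [reApplyInnerSelf] at this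
    set m : ℂ := inner ℂ (x k) h with hm
    by_cases hm0 : m = 0
    · rw [hm0]; simp only [norm_zero]; exact Real.sqrt_nonneg _
    set c : ℂ := -(m / (‖m‖ : ℂ)) with hc
    have habs : (‖m‖ : ℝ) ≠ 0 := by simpa using hm0
    have hcconj : (starRingEnd ℂ) c * m = -(‖m‖ : ℂ) := by
      have hne : (‖m‖ : ℂ) ≠ 0 := by exact_mod_cast habs
      rw [hc]
      simp only [map_neg, map_div₀, Complex.conj_ofReal, neg_mul]
      rw [div_mul_eq_mul_div, RCLike.conj_mul]
      field_simp
      simp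
    have hcabs : ‖c‖ = 1 := by
      rw [hc]
      simp [map_div₀, div_self habs]
    -- quadratic inequality in t
    have hquad : ∀ t : ℝ, 0 ≤ B * (t * t) + (-(2 * ‖m‖)) * t + A := by
      intro t
      set z : WithLp 2 (H × K) :=
        (WithLp.prodContinuousLinearEquiv 2 ℂ H K).symm (h, ((t : ℂ) * c) • k) with hz
      have hz1 : z.fst = h := rfl
      have hz2 : z.snd = ((t : ℂ) * c) • k := rfl
      have := (hpos z).2
      rw [inner_blockOp, hz1, hz2] at this
      have e1 : (inner ℂ (x (((t : ℂ) * c) • k)) h : ℂ) = ((-(t * ‖m‖) : ℝ) : ℂ) := by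
        rw [map_smul, inner_smul_left, map_mul, Complex.conj_ofReal, mul_assoc, ← hm, hcconj]
        push_cast; ring
      have e2 : (inner ℂ (b (((t : ℂ) * c) • k)) (((t : ℂ) * c) • k) : ℂ)
          = ((t * t : ℝ) : ℂ) * inner ℂ (b k) k := by
        rw [map_smul, inner_smul_left, inner_smul_right]
        have hss : (starRingEnd ℂ) ((t : ℂ) * c) * ((t : ℂ) * c) = ((t * t : ℝ) : ℂ) := by
          have hcc : (starRingEnd ℂ) c * c = 1 := by
            rw [RCLike.conj_mul, hcabs]
            norm_num
          rw [map_mul, Complex.conj_ofReal]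
          push_cast
          calc (t : ℂ) * (starRingEnd ℂ) c * ((t : ℂ) * c)
              = (t : ℂ) * (t : ℂ) * ((starRingEnd ℂ) c * c) := by ring
            _ = (t : ℂ) * (t : ℂ) := by rw [hcc, mul_one]
        rw [← mul_assoc, hss]
      rw [e1, e2, Complex.conj_ofReal] at this
      simp only [RCLike.re_to_complex, Complex.add_re, Complex.mul_re, Complex.ofReal_re,
        Complex.ofReal_im, zero_mul, sub_zero] at this
      rw [← hA, ← hB] at this
      linarith
    have hd := discrim_le_zero hquad
    rw [discrim] at hd
    apply Real.le_sqrt_of_sq_le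
    nlinarith [norm_nonneg m]
  · intro hle z
    set h : H := z.fst
    set k : K := z.snd
    set A : ℝ := (inner ℂ (a h) h : ℂ).re with hA
    set B : ℝ := (inner ℂ (b k) k : ℂ).re with hB
    have hA0 : 0 ≤ A := by
      have := ha.2 h; rwa [reApplyInnerSelf] at this
    have hB0 : 0 ≤ B := by
      have := hb.2 k; rwa [reApplyInnerSelf] at this
    set m : ℂ := inner ℂ (x k) h with hm
    have earef : (inner ℂ (a h) h : ℂ) = (A : ℂ) := by
      have : (starRingEnd ℂ) (inner ℂ (a h) h : ℂ) = inner ℂ (a h) h := by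
        rw [inner_conj_symm]
        exact ((ha.1 h h).symm)
      rw [hA, Complex.conj_eq_iff_re.mp this]
    have ebref : (inner ℂ (b k) k : ℂ) = (B : ℂ) := by
      have : (starRingEnd ℂ) (inner ℂ (b k) k : ℂ) = inner ℂ (b k) k := by
        rw [inner_conj_symm]
        exact ((hb.1 k k).symm)
      rw [hB, Complex.conj_eq_iff_re.mp this]
    have key : (inner ℂ (blockOp a b x z) z : ℂ) = ((A + 2 * m.re + B : ℝ) : ℂ) := by
      rw [inner_blockOp, earef, ebref, ← hm]
      have : m + (starRingEnd ℂ) m = ((2 * m.re : ℝ) : ℂ) := by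
        rw [Complex.add_conj]
      push_cast
      rw [add_assoc (A:ℂ), this]
      push_cast; ring
    have hre : 0 ≤ A + 2 * m.re + B := by
      have h1 : ‖m‖ ≤ Real.sqrt (A * B) := hle h k
      have h2 : |m.re| ≤ ‖m‖ := Complex.abs_re_le_norm m
      have h3 : Real.sqrt (A * B) = Real.sqrt A * Real.sqrt B := Real.sqrt_mul hA0 B
      nlinarith [Real.sq_sqrt hA0, Real.sq_sqrt hB0, sq_nonneg (Real.sqrt A - Real.sqrt B),
        abs_nonneg m.re, neg_abs_le m.re]
    constructor
    · rw [key]; norm_num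
    · rw [key]; simpa using hre
end

section
/- Let ψ = ∑_{j=1}^d λ_j (x_j ⊗ y_j) be a unit vector in ℂ^d ⊗ ℂ^d in Schmidt form with λ_j ≥ 0, and let ψ' be any maximally entangled unit vector, i.e. ψ' = (1/√d) ∑_{j=1}^d ξ_j ⊗ η_j for orthonormal bases (ξ_j), (η_j). Then |⟨ψ, ψ'⟩| ≤ (1/√d) ∑_{j=1}^d λ_j, and this bound is attained by some maximally entangled ψ'. -/
lemma key_reorder {d : ℕ} (F : Fin d → Fin d → Fin d → Fin d → ℂ) :
    ∑ p1 : Fin d, ∑ p2 : Fin d, ∑ k : Fin d, ∑ j : Fin d, F j k p1 p2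
      = ∑ j : Fin d, ∑ k : Fin d, ∑ p2 : Fin d, ∑ p1 : Fin d, F j k p1 p2 := by
  have swap2 : ∀ (f : Fin d → Fin d → ℂ), ∑ a, ∑ b, f a b = ∑ b, ∑ a, f a b :=
    fun _ => Finset.sum_comm
  calc ∑ p1 : Fin d, ∑ p2 : Fin d, ∑ k : Fin d, ∑ j : Fin d, F j k p1 p2
      = ∑ p1 : Fin d, ∑ p2 : Fin d, ∑ j : Fin d, ∑ k : Fin d, F j k p1 p2 :=
        Finset.sum_congr rfl fun p1 _ => Finset.sum_congr rfl fun p2 _ => swap2 _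
    _ = ∑ p1 : Fin d, ∑ j : Fin d, ∑ p2 : Fin d, ∑ k : Fin d, F j k p1 p2 :=
        Finset.sum_congr rfl fun p1 _ => swap2 _
    _ = ∑ j : Fin d, ∑ p1 : Fin d, ∑ p2 : Fin d, ∑ k : Fin d, F j k p1 p2 := swap2 _
    _ = ∑ j : Fin d, ∑ p1 : Fin d, ∑ k : Fin d, ∑ p2 : Fin d, F j k p1 p2 :=
        Finset.sum_congr rfl fun j _ => Finset.sum_congr rfl fun p1 _ => swap2 _
    _ = ∑ j : Fin d, ∑ k : Fin d, ∑ p1 : Fin d, ∑ p2 : Fin d, F j k p1 p2 :=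
        Finset.sum_congr rfl fun j _ => swap2 _
    _ = ∑ j : Fin d, ∑ k : Fin d, ∑ p2 : Fin d, ∑ p1 : Fin d, F j k p1 p2 :=
        Finset.sum_congr rfl fun j _ => Finset.sum_congr rfl fun k _ => swap2 _

lemma aux_inner (d : ℕ) (lam : Fin d → ℝ) (x y ξ η : Fin d → EuclideanSpace ℂ (Fin d))
    (ψ ψ' : EuclideanSpace ℂ (Fin d × Fin d))
    (hψ : ∀ p : Fin d × Fin d, ψ p = ∑ j, (lam j : ℂ) * x j p.1 * y j p.2)
    (hψ' : ∀ p : Fin d × Fin d, ψ' p = ((Real.sqrt d)⁻¹ : ℂ) * ∑ j, ξ j p.1 * η j p.2) :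
    (inner ℂ ψ ψ' : ℂ) = ((Real.sqrt d)⁻¹ : ℂ) *
      ∑ j, ∑ k, (lam j : ℂ) * (inner ℂ (x j) (ξ k) : ℂ) * (inner ℂ (y j) (η k) : ℂ) := by
  simp only [PiLp.inner_apply, RCLike.inner_apply, hψ, hψ']
  simp only [map_sum, map_mul, Finset.mul_sum, Finset.sum_mul]
  rw [Fintype.sum_prod_type]
  rw [key_reorder]
  rw [Finset.sum_comm]
  refine Finset.sum_congr rfl fun j _ => Finset.sum_congr rfl fun k _ =>
    Finset.sum_congr rfl fun p2 _ => Finset.sum_congr rfl fun p1 _ => by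
      rw [Complex.conj_ofReal]; ring

/-- For a unit vector `ψ = ∑ λ_j (x_j ⊗ y_j)` of `ℂ^d ⊗ ℂ^d` in Schmidt form,
`|⟨ψ, ψ'⟩| ≤ (1/√d) ∑ λ_j` for every maximally entangled unit vector
`ψ' = (1/√d) ∑ ξ_j ⊗ η_j`, and the bound is attained by some maximally entangled `ψ'`. -/
theorem stmt_11 (d : ℕ) (hd : 0 < d) (lam : Fin d → ℝ)
    (x y : Fin d → EuclideanSpace ℂ (Fin d))
    (hlam : ∀ j, 0 ≤ lam j) (hsum : ∑ j, lam j ^ 2 = 1)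
    (hx : Orthonormal ℂ x) (hy : Orthonormal ℂ y)
    (ψ : EuclideanSpace ℂ (Fin d × Fin d))
    (hψ : ∀ p : Fin d × Fin d, ψ p = ∑ j, (lam j : ℂ) * x j p.1 * y j p.2) :
    (∀ (ξ η : Fin d → EuclideanSpace ℂ (Fin d))
        (ψ' : EuclideanSpace ℂ (Fin d × Fin d)),
        Orthonormal ℂ ξ → Orthonormal ℂ η →
        (∀ p : Fin d × Fin d, ψ' p = ((Real.sqrt d)⁻¹ : ℂ) * ∑ j, ξ j p.1 * η j p.2) →
        ‖(inner ℂ ψ ψ' : ℂ)‖ ≤ (Real.sqrt d)⁻¹ * ∑ j, lam j) ∧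
    (∃ (ξ η : Fin d → EuclideanSpace ℂ (Fin d))
        (ψ' : EuclideanSpace ℂ (Fin d × Fin d)),
        Orthonormal ℂ ξ ∧ Orthonormal ℂ η ∧
        (∀ p : Fin d × Fin d, ψ' p = ((Real.sqrt d)⁻¹ : ℂ) * ∑ j, ξ j p.1 * η j p.2) ∧
        ‖(inner ℂ ψ ψ' : ℂ)‖ = (Real.sqrt d)⁻¹ * ∑ j, lam j) := by
  have hsd : (0:ℝ) ≤ (Real.sqrt d)⁻¹ := inv_nonneg.mpr (Real.sqrt_nonneg _)
  constructor
  · intro ξ η ψ' hξ hη hψ'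
    rw [aux_inner d lam x y ξ η ψ ψ' hψ hψ', norm_mul]
    have habs : ‖(((Real.sqrt d : ℝ) : ℂ))⁻¹‖ = (Real.sqrt d)⁻¹ := by
      rw [norm_inv, Complex.norm_real, Real.norm_of_nonneg (Real.sqrt_nonneg _)]
    rw [habs]
    refine mul_le_mul_of_nonneg_left ?_ hsd
    calc ‖(∑ j, ∑ k, (lam j : ℂ) * (inner ℂ (x j) (ξ k) : ℂ) * (inner ℂ (y j) (η k) : ℂ))‖
        ≤ ∑ j, ‖(∑ k, (lam j : ℂ) * (inner ℂ (x j) (ξ k) : ℂ) * (inner ℂ (y j) (η k) : ℂ))‖ :=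
          norm_sum_le _ _
      _ ≤ ∑ j, ∑ k, ‖((lam j : ℂ) * (inner ℂ (x j) (ξ k) : ℂ) * (inner ℂ (y j) (η k) : ℂ))‖ :=
          Finset.sum_le_sum fun j _ => norm_sum_le _ _
      _ = ∑ j, lam j * ∑ k, ‖(inner ℂ (x j) (ξ k) : ℂ)‖ * ‖(inner ℂ (y j) (η k) : ℂ)‖ := by
          refine Finset.sum_congr rfl fun j _ => ?_
          rw [Finset.mul_sum]
          refine Finset.sum_congr rfl fun k _ => ?_
          rw [norm_mul, norm_mul, Complex.norm_real, Real.norm_of_nonneg (hlam j), mul_assoc]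
      _ ≤ ∑ j, lam j * 1 := by
          refine Finset.sum_le_sum fun j _ => mul_le_mul_of_nonneg_left ?_ (hlam j)
          have h1 : ∑ k, ‖(inner ℂ (ξ k) (x j) : ℂ)‖ ^ 2 ≤ ‖x j‖ ^ 2 := hξ.sum_inner_products_le _
          have h2 : ∑ k, ‖(inner ℂ (η k) (y j) : ℂ)‖ ^ 2 ≤ ‖y j‖ ^ 2 := hη.sum_inner_products_le _
          rw [hx.1 j, one_pow] at h1
          rw [hy.1 j, one_pow] at h2
          have hsym : ∀ k, ‖(inner ℂ (x j) (ξ k) : ℂ)‖ = ‖(inner ℂ (ξ k) (x j) : ℂ)‖ := by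
            intro k; rw [norm_inner_symm]
          have hsym' : ∀ k, ‖(inner ℂ (y j) (η k) : ℂ)‖ = ‖(inner ℂ (η k) (y j) : ℂ)‖ := by
            intro k; rw [norm_inner_symm]
          calc ∑ k, ‖(inner ℂ (x j) (ξ k) : ℂ)‖ * ‖(inner ℂ (y j) (η k) : ℂ)‖
              ≤ ∑ k, (‖(inner ℂ (ξ k) (x j) : ℂ)‖ ^ 2 + ‖(inner ℂ (η k) (y j) : ℂ)‖ ^ 2) / 2 := by
                refine Finset.sum_le_sum fun k _ => ?_
                rw [hsym, hsym']
                nlinarith [sq_nonneg (‖(inner ℂ (ξ k) (x j) : ℂ)‖ - ‖(inner ℂ (η k) (y j) : ℂ)‖),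
                  norm_nonneg (inner ℂ (ξ k) (x j) : ℂ), norm_nonneg (inner ℂ (η k) (y j) : ℂ)]
            _ = ((∑ k, ‖(inner ℂ (ξ k) (x j) : ℂ)‖ ^ 2) + ∑ k, ‖(inner ℂ (η k) (y j) : ℂ)‖ ^ 2) / 2 := by
                rw [← Finset.sum_add_distrib, ← Finset.sum_div]
            _ ≤ (1 + 1) / 2 := by linarith
            _ = 1 := by norm_num
      _ = ∑ j, lam j := by simp
  · refine ⟨x, y, (WithLp.toLp 2 (fun p : Fin d × Fin d => ((Real.sqrt d)⁻¹ : ℂ) * ∑ j, x j p.1 * y j p.2) :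
      EuclideanSpace ℂ (Fin d × Fin d)), hx, hy, fun p => rfl, ?_⟩
    rw [aux_inner d lam x y x y ψ (WithLp.toLp 2 (fun p : Fin d × Fin d => ((Real.sqrt d)⁻¹ : ℂ) * ∑ j, x j p.1 * y j p.2)) hψ (fun p => rfl)]
    have hx' := orthonormal_iff_ite.mp hx
    have hy' := orthonormal_iff_ite.mp hy
    have hcollapse : ∑ j, ∑ k, (lam j : ℂ) * (inner ℂ (x j) (x k) : ℂ) * (inner ℂ (y j) (y k) : ℂ)
        = ∑ j, (lam j : ℂ) := by
      refine Finset.sum_congr rfl fun j _ => ?_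
      have : ∀ k, (lam j : ℂ) * (inner ℂ (x j) (x k) : ℂ) * (inner ℂ (y j) (y k) : ℂ)
          = if k = j then (lam j : ℂ) else 0 := fun k => by
        rw [hx' j k, hy' j k]
        rcases eq_or_ne j k with h | h
        · subst h; simp
        · simp [h, Ne.symm h]
      rw [Finset.sum_congr rfl fun k _ => this k, Finset.sum_ite_eq' Finset.univ j
        (fun _ => (lam j : ℂ))]
      simp
    rw [hcollapse]
    have : (∑ j, (lam j : ℂ)) = ((∑ j, lam j : ℝ) : ℂ) := by push_cast; ring
    rw [this, norm_mul, norm_inv, Complex.norm_real, Complex.norm_real,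
      Real.norm_of_nonneg (Real.sqrt_nonneg _), Real.norm_of_nonneg (Finset.sum_nonneg fun j _ => hlam j)]
end

section
/- Let ψ ∈ ℂ^d ⊗ ℂ^d be a unit vector of Schmidt rank at most k (at most k nonzero Schmidt coefficients). Then for every maximally entangled unit vector ψ' ∈ ℂ^d ⊗ ℂ^d, |⟨ψ, ψ'⟩|² ≤ k/d. -/
/-- If `ψ ∈ ℂ^d ⊗ ℂ^d` is a unit vector of Schmidt rank at most `k`, then for every maximally
entangled unit vector `ψ'`, `|⟨ψ, ψ'⟩|² ≤ k / d`. -/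
theorem stmt_12 (d k : ℕ) (hd : 0 < d) (lam : Fin k → ℝ)
    (x y : Fin k → EuclideanSpace ℂ (Fin d))
    (hlam : ∀ j, 0 ≤ lam j) (hsum : ∑ j, lam j ^ 2 = 1)
    (hx : Orthonormal ℂ x) (hy : Orthonormal ℂ y)
    (ψ : EuclideanSpace ℂ (Fin d × Fin d))
    (hψ : ∀ p : Fin d × Fin d, ψ p = ∑ j, (lam j : ℂ) * x j p.1 * y j p.2)
    (ξ η : Fin d → EuclideanSpace ℂ (Fin d))
    (hξ : Orthonormal ℂ ξ) (hη : Orthonormal ℂ η)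
    (ψ' : EuclideanSpace ℂ (Fin d × Fin d))
    (hψ' : ∀ p : Fin d × Fin d, ψ' p = ((Real.sqrt d)⁻¹ : ℂ) * ∑ j, ξ j p.1 * η j p.2) :
    ‖(inner ℂ ψ ψ' : ℂ)‖ ^ 2 ≤ (k : ℝ) / d := by
  classical
  set F : Fin k → Fin d → Fin d → Fin d → ℂ := fun j i a b =>
    (lam j : ℂ) * ((starRingEnd ℂ) (x j a) * ξ i a) * ((starRingEnd ℂ) (y j b) * η i b) with hF
  have hpt : ∀ a b : Fin d, (starRingEnd ℂ) (ψ (a, b)) * ψ' (a, b)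
      = ((Real.sqrt d)⁻¹ : ℂ) * ∑ j, ∑ i, F j i a b := by
    intro a b
    rw [hψ, hψ']
    rw [map_sum, mul_left_comm, Finset.sum_mul_sum]
    congr 1
    refine Finset.sum_congr rfl fun j _ => Finset.sum_congr rfl fun i _ => ?_
    simp only [map_mul, Complex.conj_ofReal, hF]
    ring
  have hab : ∀ j i, ∑ a : Fin d, ∑ b : Fin d, F j i a b
      = (lam j : ℂ) * ((inner ℂ (x j) (ξ i) : ℂ) * (inner ℂ (y j) (η i) : ℂ)) := by
    intro j i
    rw [PiLp.inner_apply, PiLp.inner_apply]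
    simp only [RCLike.inner_apply]
    rw [Finset.sum_mul_sum, Finset.mul_sum]
    refine Finset.sum_congr rfl fun a _ => ?_
    rw [Finset.mul_sum]
    exact Finset.sum_congr rfl fun b _ => by simp only [hF]; ring
  have hinner : (inner ℂ ψ ψ' : ℂ) = ((Real.sqrt d)⁻¹ : ℂ) *
      ∑ j, (lam j : ℂ) * ∑ i, (inner ℂ (x j) (ξ i) : ℂ) * (inner ℂ (y j) (η i) : ℂ) := by
    have expand : (inner ℂ ψ ψ' : ℂ) = ∑ a : Fin d, ∑ b : Fin d,
        (starRingEnd ℂ) (ψ (a, b)) * ψ' (a, b) := by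
      rw [PiLp.inner_apply]
      simp only [RCLike.inner_apply]
      rw [Fintype.sum_prod_type]
      exact Finset.sum_congr rfl fun a _ => Finset.sum_congr rfl fun b _ => by ring
    rw [expand]
    simp only [hpt, ← Finset.mul_sum]
    congr 1
    calc ∑ a : Fin d, ∑ b : Fin d, ∑ j, ∑ i, F j i a b
        = ∑ p : Fin d × Fin d, ∑ q : Fin k × Fin d, F q.1 q.2 p.1 p.2 := by
          rw [Fintype.sum_prod_type (f := fun p : Fin d × Fin d =>
            ∑ q : Fin k × Fin d, F q.1 q.2 p.1 p.2)]
          exact Finset.sum_congr rfl fun a _ => Finset.sum_congr rfl fun b _ =>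
            (Fintype.sum_prod_type (f := fun q : Fin k × Fin d => F q.1 q.2 a b)).symm
      _ = ∑ q : Fin k × Fin d, ∑ p : Fin d × Fin d, F q.1 q.2 p.1 p.2 := Finset.sum_comm
      _ = ∑ j, (lam j : ℂ) * ∑ i, (inner ℂ (x j) (ξ i) : ℂ) * (inner ℂ (y j) (η i) : ℂ) := by
          rw [Fintype.sum_prod_type (f := fun q : Fin k × Fin d =>
            ∑ p : Fin d × Fin d, F q.1 q.2 p.1 p.2)]
          refine Finset.sum_congr rfl fun j _ => ?_
          rw [Finset.mul_sum]
          refine Finset.sum_congr rfl fun i _ => ?_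
          rw [Fintype.sum_prod_type (f := fun p : Fin d × Fin d => F j i p.1 p.2), hab]
  -- Bound part
  set A : Fin k → Fin d → ℝ := fun j i => ‖(inner ℂ (x j) (ξ i) : ℂ)‖ with hA
  set B : Fin k → Fin d → ℝ := fun j i => ‖(inner ℂ (y j) (η i) : ℂ)‖ with hB
  have hAle : ∀ j, ∑ i, A j i ^ 2 ≤ 1 := by
    intro j
    have h := Orthonormal.sum_inner_products_le (𝕜 := ℂ) (x j) hξ (s := Finset.univ)
    rw [hx.1 j, one_pow] at h
    refine le_trans (le_of_eq (Finset.sum_congr rfl fun i _ => ?_)) h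
    rw [norm_inner_symm]
  have hBle : ∀ j, ∑ i, B j i ^ 2 ≤ 1 := by
    intro j
    have h := Orthonormal.sum_inner_products_le (𝕜 := ℂ) (y j) hη (s := Finset.univ)
    rw [hy.1 j, one_pow] at h
    refine le_trans (le_of_eq (Finset.sum_congr rfl fun i _ => ?_)) h
    rw [norm_inner_symm]
  have hc : ∀ j, ‖(∑ i, (inner ℂ (x j) (ξ i) : ℂ) * (inner ℂ (y j) (η i) : ℂ))‖ ≤ 1 := by
    intro j
    have h1 : ‖(∑ i, (inner ℂ (x j) (ξ i) : ℂ) * (inner ℂ (y j) (η i) : ℂ))‖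
        ≤ ∑ i, A j i * B j i := by
      refine (norm_sum_le _ _).trans ?_
      exact le_of_eq (Finset.sum_congr rfl fun i _ => norm_mul _ _)
    have h2 : (∑ i, A j i * B j i) ^ 2 ≤ (∑ i, A j i ^ 2) * ∑ i, B j i ^ 2 :=
      Finset.sum_mul_sq_le_sq_mul_sq _ _ _
    have h3 : (∑ i, A j i * B j i) ^ 2 ≤ 1 := by
      refine h2.trans ?_
      calc (∑ i, A j i ^ 2) * ∑ i, B j i ^ 2 ≤ 1 * 1 := by
            refine mul_le_mul (hAle j) (hBle j) ?_ zero_le_one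
            exact Finset.sum_nonneg fun i _ => sq_nonneg _
        _ = 1 := one_mul 1
    have h4 : ∑ i, A j i * B j i ≤ 1 := by
      have hpos : (0:ℝ) ≤ ∑ i, A j i * B j i :=
        Finset.sum_nonneg fun i _ => mul_nonneg (norm_nonneg _) (norm_nonneg _)
      nlinarith [h3, hpos]
    exact h1.trans h4
  have habs : ‖(inner ℂ ψ ψ' : ℂ)‖ ≤ (Real.sqrt d)⁻¹ * ∑ j, lam j := by
    rw [hinner, norm_mul]
    have h0 : ‖((Real.sqrt d : ℂ))⁻¹‖ = (Real.sqrt d)⁻¹ := by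
      rw [norm_inv, Complex.norm_real, Real.norm_of_nonneg (Real.sqrt_nonneg _)]
    rw [h0]
    refine mul_le_mul_of_nonneg_left ?_ (by positivity)
    refine (norm_sum_le _ _).trans ?_
    refine Finset.sum_le_sum fun j _ => ?_
    rw [norm_mul, Complex.norm_real, Real.norm_of_nonneg (hlam j)]
    simpa using mul_le_mul_of_nonneg_left (hc j) (hlam j)
  have hsumlam : (∑ j, lam j) ^ 2 ≤ (k : ℝ) := by
    have := sq_sum_le_card_mul_sum_sq (s := Finset.univ) (f := lam)
    simpa [hsum] using this
  have hnn : (0:ℝ) ≤ ‖(inner ℂ ψ ψ' : ℂ)‖ := norm_nonneg _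
  have hlamnn : (0:ℝ) ≤ ∑ j, lam j := Finset.sum_nonneg fun j _ => hlam j
  have hsq : ‖(inner ℂ ψ ψ' : ℂ)‖ ^ 2 ≤ ((Real.sqrt d)⁻¹ * ∑ j, lam j) ^ 2 := by
    exact pow_le_pow_left₀ hnn habs 2
  refine hsq.trans ?_
  rw [mul_pow]
  have hd' : (0:ℝ) < d := by exact_mod_cast hd
  have : ((Real.sqrt d)⁻¹ : ℝ) ^ 2 = 1 / d := by
    rw [inv_pow, Real.sq_sqrt hd'.le, one_div]
  rw [this]
  calc 1 / (d:ℝ) * (∑ j, lam j) ^ 2 ≤ 1 / d * k := by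
        exact mul_le_mul_of_nonneg_left hsumlam (by positivity)
    _ = (k:ℝ) / d := by ring
end

section
/- Let ρ_{AB} be a density matrix on ℂ^m ⊗ ℂ^n with marginals ρ_A = Tr_B(ρ_{AB}) and ρ_B = Tr_A(ρ_{AB}). Then the von Neumann entropy satisfies subadditivity: S(ρ_{AB}) ≤ S(ρ_A) + S(ρ_B), where S(ρ) = −Tr(ρ log ρ). -/
open Matrix
open scoped ComplexOrder

/-- The von Neumann entropy `S(ρ) = −Tr(ρ log ρ)`, computed via the eigenvalues of a
Hermitian matrix with the convention `0 log 0 = 0` (as in `Real.log 0 = 0`);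
junk value `0` for non-Hermitian matrices. -/
noncomputable def vnEntropy {ι : Type*} [Fintype ι] [DecidableEq ι]
    (ρ : Matrix ι ι ℂ) : ℝ :=
  if h : ρ.IsHermitian then -∑ i, h.eigenvalues i * Real.log (h.eigenvalues i) else 0

set_option linter.unusedSectionVars false

section auxiliary

noncomputable def evec {ι : Type*} [Fintype ι] [DecidableEq ι] {M : Matrix ι ι ℂ}
    (h : M.IsHermitian) (i k : ι) : ℂ :=
  (h.eigenvectorUnitary : Matrix ι ι ℂ) k i

section helpers
variable {ι : Type*} [Fintype ι] [DecidableEq ι] {M : Matrix ι ι ℂ} (h : M.IsHermitian)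

lemma herm_apply (j k : ι) :
    M j k = ∑ i, (h.eigenvalues i : ℂ) * (evec h i j * star (evec h i k)) := by
  conv_lhs => rw [h.spectral_theorem, Unitary.conjStarAlgAut_apply]
  rw [mul_apply]
  refine Finset.sum_congr rfl fun i _ => ?_
  rw [mul_apply]
  simp [evec, diagonal, Matrix.star_apply]
  ring

lemma herm_ortho (i i' : ι) :
    ∑ k, star (evec h i k) * evec h i' k = if i = i' then 1 else 0 := by
  have h1 : star (h.eigenvectorUnitary : Matrix ι ι ℂ) * (h.eigenvectorUnitary : Matrix ι ι ℂ) = 1 :=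
    Matrix.mem_unitaryGroup_iff'.mp h.eigenvectorUnitary.2
  have := congrFun (congrFun h1 i) i'
  simpa [evec, mul_apply, Matrix.star_apply, Matrix.one_apply] using this

lemma herm_complete (j k : ι) :
    ∑ i, evec h i j * star (evec h i k) = if j = k then 1 else 0 := by
  have h1 : (h.eigenvectorUnitary : Matrix ι ι ℂ) * star (h.eigenvectorUnitary : Matrix ι ι ℂ) = 1 :=
    Matrix.mem_unitaryGroup_iff.mp h.eigenvectorUnitary.2
  have := congrFun (congrFun h1 j) k
  simpa [evec, mul_apply, Matrix.star_apply, Matrix.one_apply] using this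

lemma herm_complete' (j k : ι) :
    ∑ i, star (evec h i k) * evec h i j = if j = k then 1 else 0 := by
  rw [← herm_complete h j k]
  exact Finset.sum_congr rfl fun i _ => mul_comm _ _

lemma herm_mulvec (i j : ι) :
    ∑ k, M j k * evec h i k = (h.eigenvalues i : ℂ) * evec h i j := by
  calc ∑ k, M j k * evec h i k
      = ∑ k, ∑ i', ((h.eigenvalues i' : ℂ) * (evec h i' j * star (evec h i' k))) * evec h i k := by
        refine Finset.sum_congr rfl fun k _ => ?_
        rw [herm_apply h j k, Finset.sum_mul]
    _ = ∑ i', (h.eigenvalues i' : ℂ) * evec h i' j * ∑ k, star (evec h i' k) * evec h i k := by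
        rw [Finset.sum_comm]
        refine Finset.sum_congr rfl fun i' _ => ?_
        rw [Finset.mul_sum]
        refine Finset.sum_congr rfl fun k _ => ?_
        ring
    _ = (h.eigenvalues i : ℂ) * evec h i j := by
        rw [Finset.sum_congr rfl fun i' (_ : i' ∈ Finset.univ) => by rw [herm_ortho h i' i]]
        simp

lemma herm_quad (a : ι) :
    ∑ j, ∑ k, star (evec h a j) * (M j k * evec h a k) = (h.eigenvalues a : ℂ) := by
  calc ∑ j, ∑ k, star (evec h a j) * (M j k * evec h a k)
      = ∑ j, star (evec h a j) * ∑ k, M j k * evec h a k := by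
        simp [Finset.mul_sum]
    _ = (h.eigenvalues a : ℂ) * ∑ j, star (evec h a j) * evec h a j := by
        rw [Finset.mul_sum]
        refine Finset.sum_congr rfl fun j _ => ?_
        rw [herm_mulvec h a j]; ring
    _ = (h.eigenvalues a : ℂ) := by rw [herm_ortho h a a]; simp

lemma herm_trace : M.trace = ∑ i, (h.eigenvalues i : ℂ) := by
  rw [trace]
  calc ∑ k, M.diag k = ∑ k, ∑ i, (h.eigenvalues i : ℂ) * (evec h i k * star (evec h i k)) := by
        exact Finset.sum_congr rfl fun k _ => herm_apply h k k
    _ = ∑ i, (h.eigenvalues i : ℂ) * ∑ k, star (evec h i k) * evec h i k := by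
        rw [Finset.sum_comm]
        refine Finset.sum_congr rfl fun i _ => ?_
        rw [Finset.mul_sum]
        refine Finset.sum_congr rfl fun k _ => ?_
        ring
    _ = ∑ i, (h.eigenvalues i : ℂ) := by
        refine Finset.sum_congr rfl fun i _ => ?_
        rw [herm_ortho h i i]; simp

end helpers

lemma sum3_comm' {I J K β : Type*} [AddCommMonoid β] [Fintype I] [Fintype J] [Fintype K]
    (F : I → J → K → β) :
    ∑ a : J, ∑ b : K, ∑ i : I, F i a b = ∑ i : I, ∑ a : J, ∑ b : K, F i a b := by
  calc ∑ a : J, ∑ b : K, ∑ i : I, F i a b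
      = ∑ a : J, ∑ i : I, ∑ b : K, F i a b :=
        Finset.sum_congr rfl fun a _ => Finset.sum_comm
    _ = ∑ i : I, ∑ a : J, ∑ b : K, F i a b := Finset.sum_comm

lemma sum4_comm {A B C D β : Type*} [AddCommMonoid β] [Fintype A] [Fintype B] [Fintype C] [Fintype D]
    (F : A → B → C → D → β) :
    ∑ a, ∑ b, ∑ c, ∑ d, F a b c d = ∑ c, ∑ d, ∑ a, ∑ b, F a b c d := by
  calc ∑ a, ∑ b, ∑ c, ∑ d, F a b c d
      = ∑ a, ∑ c, ∑ d, ∑ b, F a b c d :=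
        Finset.sum_congr rfl fun a _ => (sum3_comm' fun b c d => F a b c d).symm
    _ = ∑ c, ∑ d, ∑ a, ∑ b, F a b c d := (sum3_comm' fun a c d => ∑ b, F a b c d).symm

section quadform
variable {ι : Type*} [Fintype ι] [DecidableEq ι] {M : Matrix ι ι ℂ} (h : M.IsHermitian)

lemma star_overlap (w : ι → ℂ) (i : ι) :
    star (∑ k, star (evec h i k) * w k) = ∑ j, star (w j) * evec h i j := by
  rw [star_sum]
  refine Finset.sum_congr rfl fun j _ => ?_
  rw [star_mul', star_star]
  ring

lemma herm_quadform (w : ι → ℂ) :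
    ∑ j, ∑ k, star (w j) * (M j k * w k)
      = ∑ i, (h.eigenvalues i : ℂ) *
          (star (∑ k, star (evec h i k) * w k) * (∑ k, star (evec h i k) * w k)) := by
  calc ∑ j, ∑ k, star (w j) * (M j k * w k)
      = ∑ j, ∑ k, ∑ i, (h.eigenvalues i : ℂ) * ((star (w j) * evec h i j) * (star (evec h i k) * w k)) := by
        refine Finset.sum_congr rfl fun j _ => Finset.sum_congr rfl fun k _ => ?_
        rw [herm_apply h j k, Finset.sum_mul, Finset.mul_sum]
        refine Finset.sum_congr rfl fun i _ => ?_
        ring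
    _ = ∑ i, ∑ j, ∑ k, (h.eigenvalues i : ℂ) * ((star (w j) * evec h i j) * (star (evec h i k) * w k)) :=
        sum3_comm' _
    _ = ∑ i, (h.eigenvalues i : ℂ) *
          ((∑ j, star (w j) * evec h i j) * (∑ k, star (evec h i k) * w k)) := by
        refine Finset.sum_congr rfl fun i _ => ?_
        rw [Finset.sum_mul_sum]
        simp only [Finset.mul_sum]
    _ = _ := by
        refine Finset.sum_congr rfl fun i _ => ?_
        rw [star_overlap h w i]

lemma herm_parseval (w : ι → ℂ) :
    ∑ i, star (∑ k, star (evec h i k) * w k) * (∑ k, star (evec h i k) * w k)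
      = ∑ j, star (w j) * w j := by
  calc ∑ i, star (∑ k, star (evec h i k) * w k) * (∑ k, star (evec h i k) * w k)
      = ∑ i, ∑ j, ∑ k, (star (w j) * w k) * (evec h i j * star (evec h i k)) := by
        refine Finset.sum_congr rfl fun i _ => ?_
        rw [star_overlap h w i, Finset.sum_mul_sum]
        refine Finset.sum_congr rfl fun j _ => Finset.sum_congr rfl fun k _ => ?_
        ring
    _ = ∑ j, ∑ k, (star (w j) * w k) * ∑ i, evec h i j * star (evec h i k) := by
        rw [(sum3_comm' fun i j k => (star (w j) * w k) * (evec h i j * star (evec h i k))).symm]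
        refine Finset.sum_congr rfl fun j _ => Finset.sum_congr rfl fun k _ => ?_
        rw [Finset.mul_sum]
    _ = ∑ j, star (w j) * w j := by
        refine Finset.sum_congr rfl fun j _ => ?_
        rw [Finset.sum_congr rfl fun k (_ : k ∈ Finset.univ) => by rw [herm_complete h j k]]
        simp

end quadform

section prodbasis
variable {ιA ιB : Type*} [Fintype ιA] [DecidableEq ιA] [Fintype ιB] [DecidableEq ιB]
  {P : Matrix ιA ιA ℂ} {Q : Matrix ιB ιB ℂ} (hP : P.IsHermitian) (hQ : Q.IsHermitian)

lemma prod_if (j k : ιA × ιB) :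
    ((if j.1 = k.1 then (1 : ℂ) else 0) * (if j.2 = k.2 then 1 else 0)) = if j = k then 1 else 0 := by
  by_cases h1 : j.1 = k.1 <;> by_cases h2 : j.2 = k.2 <;>
    simp [Prod.ext_iff, h1, h2]

lemma prod_parseval (x : ιA × ιB → ℂ) :
    ∑ a, ∑ b, star (∑ k, star (evec hP a k.1 * evec hQ b k.2) * x k) *
               (∑ k, star (evec hP a k.1 * evec hQ b k.2) * x k)
      = ∑ j, star (x j) * x j := by
  calc ∑ a, ∑ b, star (∑ k, star (evec hP a k.1 * evec hQ b k.2) * x k) *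
               (∑ k, star (evec hP a k.1 * evec hQ b k.2) * x k)
      = ∑ a, ∑ b, ∑ j, ∑ k, (star (x j) * x k) *
          ((evec hP a j.1 * star (evec hP a k.1)) * (evec hQ b j.2 * star (evec hQ b k.2))) := by
        refine Finset.sum_congr rfl fun a _ => Finset.sum_congr rfl fun b _ => ?_
        rw [star_sum, Finset.sum_mul_sum]
        refine Finset.sum_congr rfl fun j _ => Finset.sum_congr rfl fun k _ => ?_
        simp only [star_mul', star_star]
        ring
    _ = ∑ j, ∑ k, ∑ a, ∑ b, (star (x j) * x k) *
          ((evec hP a j.1 * star (evec hP a k.1)) * (evec hQ b j.2 * star (evec hQ b k.2))) :=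
        sum4_comm _
    _ = ∑ j, ∑ k, (star (x j) * x k) *
          ((∑ a, evec hP a j.1 * star (evec hP a k.1)) * (∑ b, evec hQ b j.2 * star (evec hQ b k.2))) := by
        refine Finset.sum_congr rfl fun j _ => Finset.sum_congr rfl fun k _ => ?_
        rw [Finset.sum_mul_sum]
        simp only [Finset.mul_sum]
    _ = ∑ j, ∑ k, (star (x j) * x k) * (if j = k then 1 else 0) := by
        refine Finset.sum_congr rfl fun j _ => Finset.sum_congr rfl fun k _ => ?_
        rw [herm_complete hP j.1 k.1, herm_complete hQ j.2 k.2, prod_if]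
    _ = ∑ j, star (x j) * x j := by
        refine Finset.sum_congr rfl fun j _ => ?_
        simp

end prodbasis

section partialtr
variable {m n : ℕ} {ρ : Matrix (Fin m × Fin n) (Fin m × Fin n) ℂ}
  {A : Matrix (Fin m) (Fin m) ℂ} {B : Matrix (Fin n) (Fin n) ℂ}
  (hA : A.IsHermitian) (hB : B.IsHermitian)

lemma partialA (hAdef : ∀ i j, A i j = ∑ l, ρ (i, l) (j, l)) (a : Fin m) :
    ∑ b, ∑ j, ∑ k, star (evec hA a j.1 * evec hB b j.2) * (ρ j k * (evec hA a k.1 * evec hB b k.2))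
      = (hA.eigenvalues a : ℂ) := by
  calc ∑ b, ∑ j, ∑ k, star (evec hA a j.1 * evec hB b j.2) * (ρ j k * (evec hA a k.1 * evec hB b k.2))
      = ∑ b, ∑ j, ∑ k, (star (evec hA a j.1) * (ρ j k * evec hA a k.1)) *
          (star (evec hB b j.2) * evec hB b k.2) := by
        refine Finset.sum_congr rfl fun b _ => Finset.sum_congr rfl fun j _ =>
          Finset.sum_congr rfl fun k _ => ?_
        simp only [star_mul']
        ring
    _ = ∑ j, ∑ k, ∑ b, (star (evec hA a j.1) * (ρ j k * evec hA a k.1)) *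
          (star (evec hB b j.2) * evec hB b k.2) := (sum3_comm' _).symm
    _ = ∑ j, ∑ k, (star (evec hA a j.1) * (ρ j k * evec hA a k.1)) *
          (if k.2 = j.2 then 1 else 0) := by
        refine Finset.sum_congr rfl fun j _ => Finset.sum_congr rfl fun k _ => ?_
        rw [← Finset.mul_sum, herm_complete' hB k.2 j.2]
    _ = ∑ j1, ∑ j2, ∑ k1, star (evec hA a j1) * (ρ (j1, j2) (k1, j2) * evec hA a k1) := by
        rw [Fintype.sum_prod_type]
        refine Finset.sum_congr rfl fun j1 _ => Finset.sum_congr rfl fun j2 _ => ?_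
        rw [Fintype.sum_prod_type]
        refine Finset.sum_congr rfl fun k1 _ => ?_
        simp
    _ = ∑ j1, ∑ k1, star (evec hA a j1) * (A j1 k1 * evec hA a k1) := by
        refine Finset.sum_congr rfl fun j1 _ => ?_
        rw [Finset.sum_comm]
        refine Finset.sum_congr rfl fun k1 _ => ?_
        rw [hAdef j1 k1, Finset.sum_mul, Finset.mul_sum]
    _ = (hA.eigenvalues a : ℂ) := herm_quad hA a

lemma partialB (hBdef : ∀ s t, B s t = ∑ i, ρ (i, s) (i, t)) (b : Fin n) :
    ∑ a, ∑ j, ∑ k, star (evec hA a j.1 * evec hB b j.2) * (ρ j k * (evec hA a k.1 * evec hB b k.2))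
      = (hB.eigenvalues b : ℂ) := by
  calc ∑ a, ∑ j, ∑ k, star (evec hA a j.1 * evec hB b j.2) * (ρ j k * (evec hA a k.1 * evec hB b k.2))
      = ∑ a, ∑ j, ∑ k, (star (evec hB b j.2) * (ρ j k * evec hB b k.2)) *
          (star (evec hA a j.1) * evec hA a k.1) := by
        refine Finset.sum_congr rfl fun a _ => Finset.sum_congr rfl fun j _ =>
          Finset.sum_congr rfl fun k _ => ?_
        simp only [star_mul']
        ring
    _ = ∑ j, ∑ k, ∑ a, (star (evec hB b j.2) * (ρ j k * evec hB b k.2)) *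
          (star (evec hA a j.1) * evec hA a k.1) := (sum3_comm' _).symm
    _ = ∑ j, ∑ k, (star (evec hB b j.2) * (ρ j k * evec hB b k.2)) *
          (if k.1 = j.1 then 1 else 0) := by
        refine Finset.sum_congr rfl fun j _ => Finset.sum_congr rfl fun k _ => ?_
        rw [← Finset.mul_sum, herm_complete' hA k.1 j.1]
    _ = ∑ j2, ∑ j1, ∑ k2, star (evec hB b j2) * (ρ (j1, j2) (j1, k2) * evec hB b k2) := by
        rw [Fintype.sum_prod_type, Finset.sum_comm]
        refine Finset.sum_congr rfl fun j2 _ => Finset.sum_congr rfl fun j1 _ => ?_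
        rw [Fintype.sum_prod_type]
        calc ∑ k1, ∑ k2, (star (evec hB b j2) * (ρ (j1, j2) (k1, k2) * evec hB b k2)) *
              (if k1 = j1 then 1 else 0)
            = ∑ k1, (if k1 = j1 then ∑ k2, star (evec hB b j2) * (ρ (j1, j2) (k1, k2) * evec hB b k2) else 0) := by
              refine Finset.sum_congr rfl fun k1 _ => ?_
              by_cases hk : k1 = j1 <;> simp [hk]
          _ = ∑ k2, star (evec hB b j2) * (ρ (j1, j2) (j1, k2) * evec hB b k2) := by
              simp
    _ = ∑ j2, ∑ k2, star (evec hB b j2) * (B j2 k2 * evec hB b k2) := by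
        refine Finset.sum_congr rfl fun j2 _ => ?_
        rw [Finset.sum_comm]
        refine Finset.sum_congr rfl fun k2 _ => ?_
        rw [hBdef j2 k2, Finset.sum_mul, Finset.mul_sum]
    _ = (hB.eigenvalues b : ℂ) := herm_quad hB b

end partialtr

lemma klein_term {lam c mu : ℝ} (hlam : 0 ≤ lam) (hc : 0 ≤ c) (hmu : 0 ≤ mu)
    (hsupp : 0 < lam * c → 0 < mu) :
    lam * c * (Real.log mu - Real.log lam) ≤ c * mu - lam * c := by
  rcases eq_or_lt_of_le (mul_nonneg hlam hc) with h0 | hpos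
  · rw [← h0]
    simp only [zero_mul, sub_zero]
    positivity
  · have hm := hsupp hpos
    have hl : 0 < lam := hlam.lt_of_ne (by
      rintro e
      rw [← e, zero_mul] at hpos
      exact lt_irrefl 0 hpos)
    have key : Real.log mu - Real.log lam ≤ mu / lam - 1 := by
      rw [← Real.log_div hm.ne' hl.ne']
      exact Real.log_le_sub_one_of_pos (div_pos hm hl)
    calc lam * c * (Real.log mu - Real.log lam) ≤ lam * c * (mu / lam - 1) :=
          mul_le_mul_of_nonneg_left key hpos.le
      _ = c * mu - lam * c := by field_simp

lemma sum3_comm {I J K : Type*} [Fintype I] [Fintype J] [Fintype K] (F : I → J → K → ℝ) :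
    ∑ a : J, ∑ b : K, ∑ i : I, F i a b = ∑ i : I, ∑ a : J, ∑ b : K, F i a b := by
  calc ∑ a : J, ∑ b : K, ∑ i : I, F i a b
      = ∑ a : J, ∑ i : I, ∑ b : K, F i a b :=
        Finset.sum_congr rfl fun a _ => Finset.sum_comm
    _ = ∑ i : I, ∑ a : J, ∑ b : K, F i a b := Finset.sum_comm

lemma core_ineq {I J K : Type*} [Fintype I] [Fintype J] [Fintype K]
    (lam : I → ℝ) (alp : J → ℝ) (bet : K → ℝ) (c : I → J → K → ℝ)
    (hlam : ∀ i, 0 ≤ lam i) (hc : ∀ i a b, 0 ≤ c i a b)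
    (hc1 : ∀ i, ∑ a, ∑ b, c i a b = 1)
    (hc2 : ∀ a b, ∑ i, c i a b = 1)
    (hsl : ∑ i, lam i = 1)
    (hqa : ∀ a, ∑ b, ∑ i, lam i * c i a b = alp a)
    (hqb : ∀ b, ∑ a, ∑ i, lam i * c i a b = bet b) :
    -∑ i, lam i * Real.log (lam i) ≤
      (-∑ a, alp a * Real.log (alp a)) + (-∑ b, bet b * Real.log (bet b)) := by
  have hq0 : ∀ a b, 0 ≤ ∑ i, lam i * c i a b := fun a b =>
    Finset.sum_nonneg fun i _ => mul_nonneg (hlam i) (hc i a b)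
  have halp0 : ∀ a, 0 ≤ alp a := fun a => (hqa a) ▸ Finset.sum_nonneg fun b _ => hq0 a b
  have hbet0 : ∀ b, 0 ≤ bet b := fun b => (hqb b) ▸ Finset.sum_nonneg fun a _ => hq0 a b
  have hqle_a : ∀ a b, (∑ i, lam i * c i a b) ≤ alp a := fun a b => (hqa a) ▸
    Finset.single_le_sum (fun b' _ => hq0 a b') (Finset.mem_univ b)
  have hqle_b : ∀ a b, (∑ i, lam i * c i a b) ≤ bet b := fun a b => (hqb b) ▸
    Finset.single_le_sum (fun a' _ => hq0 a' b) (Finset.mem_univ a)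
  have hsa : ∑ a, alp a = 1 := by
    rw [show (∑ a, alp a) = ∑ a, ∑ b, ∑ i, lam i * c i a b from
      Finset.sum_congr rfl fun a _ => (hqa a).symm, sum3_comm]
    simp only [← Finset.mul_sum]
    simp only [hc1, mul_one]
    exact hsl
  have hsb : ∑ b, bet b = 1 := by
    rw [show (∑ b, bet b) = ∑ b, ∑ a, ∑ i, lam i * c i a b from
      Finset.sum_congr rfl fun b _ => (hqb b).symm, Finset.sum_comm, sum3_comm]
    simp only [← Finset.mul_sum]
    simp only [hc1, mul_one]
    exact hsl
  have hmusum : ∑ a, ∑ b, alp a * bet b = 1 := by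
    rw [← Finset.sum_mul_sum, hsa, hsb, one_mul]
  have key : ∑ a, ∑ b, ∑ i, lam i * c i a b * (Real.log (alp a * bet b) - Real.log (lam i)) ≤ 0 := by
    have bound : ∀ a b i, lam i * c i a b * (Real.log (alp a * bet b) - Real.log (lam i))
        ≤ c i a b * (alp a * bet b) - lam i * c i a b := by
      intro a b i
      refine klein_term (hlam i) (hc i a b) (mul_nonneg (halp0 a) (hbet0 b)) fun hpos => ?_
      have hq : 0 < ∑ i', lam i' * c i' a b := lt_of_lt_of_le hpos
        (Finset.single_le_sum (fun i' _ => mul_nonneg (hlam i') (hc i' a b)) (Finset.mem_univ i))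
      exact mul_pos (lt_of_lt_of_le hq (hqle_a a b)) (lt_of_lt_of_le hq (hqle_b a b))
    calc ∑ a, ∑ b, ∑ i, lam i * c i a b * (Real.log (alp a * bet b) - Real.log (lam i))
        ≤ ∑ a, ∑ b, ∑ i, (c i a b * (alp a * bet b) - lam i * c i a b) :=
          Finset.sum_le_sum fun a _ => Finset.sum_le_sum fun b _ =>
            Finset.sum_le_sum fun i _ => bound a b i
      _ = ∑ a, ∑ b, (alp a * bet b - ∑ i, lam i * c i a b) := by
          refine Finset.sum_congr rfl fun a _ => Finset.sum_congr rfl fun b _ => ?_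
          rw [Finset.sum_sub_distrib]
          congr 1
          rw [show (∑ i, c i a b * (alp a * bet b)) = (∑ i, c i a b) * (alp a * bet b) from
            (Finset.sum_mul _ _ _).symm, hc2 a b, one_mul]
      _ = 0 := by
          simp only [Finset.sum_sub_distrib, hmusum]
          have h1 : ∑ a, ∑ b, ∑ i, lam i * c i a b = 1 := by simp only [hqa, hsa]
          rw [h1]; ring
  have hLHS : ∑ a, ∑ b, ∑ i, lam i * c i a b * Real.log (lam i)
      = ∑ i, lam i * Real.log (lam i) := by
    rw [sum3_comm]
    refine Finset.sum_congr rfl fun i _ => ?_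
    calc ∑ a, ∑ b, lam i * c i a b * Real.log (lam i)
        = ∑ a, ∑ b, (lam i * Real.log (lam i)) * c i a b := by
          refine Finset.sum_congr rfl fun a _ => Finset.sum_congr rfl fun b _ => ?_
          ring
      _ = (lam i * Real.log (lam i)) * ∑ a, ∑ b, c i a b := by
          simp only [← Finset.mul_sum]
      _ = lam i * Real.log (lam i) := by rw [hc1 i, mul_one]
  have hRHS : ∑ a, ∑ b, ∑ i, lam i * c i a b * Real.log (alp a * bet b)
      = ∑ a, alp a * Real.log (alp a) + ∑ b, bet b * Real.log (bet b) := by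
    have hsplit : ∀ a b, (∑ i, lam i * c i a b) * Real.log (alp a * bet b)
        = (∑ i, lam i * c i a b) * Real.log (alp a) + (∑ i, lam i * c i a b) * Real.log (bet b) := by
      intro a b
      rcases eq_or_lt_of_le (hq0 a b) with h | h
      · rw [← h]; ring
      · have ha : 0 < alp a := lt_of_lt_of_le h (hqle_a a b)
        have hb : 0 < bet b := lt_of_lt_of_le h (hqle_b a b)
        rw [Real.log_mul ha.ne' hb.ne', mul_add]
    calc ∑ a, ∑ b, ∑ i, lam i * c i a b * Real.log (alp a * bet b)
        = ∑ a, ∑ b, (∑ i, lam i * c i a b) * Real.log (alp a * bet b) := by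
          refine Finset.sum_congr rfl fun a _ => Finset.sum_congr rfl fun b _ => ?_
          rw [Finset.sum_mul]
      _ = ∑ a, ∑ b, ((∑ i, lam i * c i a b) * Real.log (alp a)
            + (∑ i, lam i * c i a b) * Real.log (bet b)) := by
          exact Finset.sum_congr rfl fun a _ => Finset.sum_congr rfl fun b _ => hsplit a b
      _ = ∑ a, ∑ b, (∑ i, lam i * c i a b) * Real.log (alp a)
            + ∑ a, ∑ b, (∑ i, lam i * c i a b) * Real.log (bet b) := by
          simp only [Finset.sum_add_distrib]
      _ = ∑ a, alp a * Real.log (alp a) + ∑ b, bet b * Real.log (bet b) := by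
          congr 1
          · refine Finset.sum_congr rfl fun a _ => ?_
            rw [← Finset.sum_mul, hqa a]
          · rw [Finset.sum_comm]
            refine Finset.sum_congr rfl fun b _ => ?_
            rw [← Finset.sum_mul, hqb b]
  simp only [mul_sub, Finset.sum_sub_distrib] at key
  rw [hLHS, hRHS] at key
  linarith

end auxiliary

/-- **Subadditivity of the von Neumann entropy**: `S(ρ_AB) ≤ S(ρ_A) + S(ρ_B)` where
`ρ_A`, `ρ_B` are the partial traces of the density matrix `ρ_AB` on `ℂ^m ⊗ ℂ^n`. -/
theorem stmt_17 (m n : ℕ) (ρ : Matrix (Fin m × Fin n) (Fin m × Fin n) ℂ)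
    (hρ : ρ.PosSemidef) (hρ1 : ρ.trace = 1) :
    vnEntropy ρ ≤
      vnEntropy (Matrix.of fun i j : Fin m => ∑ l, ρ (i, l) (j, l)) +
      vnEntropy (Matrix.of fun s t : Fin n => ∑ i, ρ (i, s) (i, t)) := by
  classical
  have hH : ρ.IsHermitian := hρ.1
  have hsym : ∀ p q, star (ρ p q) = ρ q p := fun p q => by
    conv_rhs => rw [← hH]
    rw [conjTranspose_apply]
  set A : Matrix (Fin m) (Fin m) ℂ := Matrix.of fun i j : Fin m => ∑ l, ρ (i, l) (j, l) with hAdef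
  set B : Matrix (Fin n) (Fin n) ℂ := Matrix.of fun s t : Fin n => ∑ i, ρ (i, s) (i, t) with hBdef
  have hA : A.IsHermitian := by
    ext i j
    rw [conjTranspose_apply, hAdef]
    simp only [Matrix.of_apply, star_sum]
    exact Finset.sum_congr rfl fun l _ => hsym _ _
  have hB : B.IsHermitian := by
    ext s t
    rw [conjTranspose_apply, hBdef]
    simp only [Matrix.of_apply, star_sum]
    exact Finset.sum_congr rfl fun i _ => hsym _ _
  -- data
  set lam : (Fin m × Fin n) → ℝ := hH.eigenvalues with hlamdef
  set alp : Fin m → ℝ := hA.eigenvalues with halpdef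
  set bet : Fin n → ℝ := hB.eigenvalues with hbetdef
  set S : (Fin m × Fin n) → Fin m → Fin n → ℂ := fun i a b =>
    ∑ k : Fin m × Fin n, star (evec hA a k.1 * evec hB b k.2) * evec hH i k with hSdef
  set c : (Fin m × Fin n) → Fin m → Fin n → ℝ := fun i a b => Complex.normSq (S i a b) with hcdef
  have hns2 : ∀ z : ℂ, star z * z = (Complex.normSq z : ℂ) := fun z => by
    rw [Complex.star_def, mul_comm, Complex.mul_conj]
  have hTS : ∀ i a b, (∑ k : Fin m × Fin n, star (evec hH i k) * (evec hA a k.1 * evec hB b k.2))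
      = star (S i a b) := by
    intro i a b
    rw [hSdef]
    simp only [star_sum, star_mul', star_star]
    exact Finset.sum_congr rfl fun k _ => by ring
  have hstar_eq : ∀ i a b,
      star (∑ k : Fin m × Fin n, star (evec hH i k) * (evec hA a k.1 * evec hB b k.2)) *
      (∑ k : Fin m × Fin n, star (evec hH i k) * (evec hA a k.1 * evec hB b k.2)) = (c i a b : ℂ) := by
    intro i a b
    rw [hTS i a b, hns2 (star (S i a b)), hcdef]
    rw [Complex.star_def, Complex.normSq_conj]
  -- hypotheses of core_ineq
  have hlam : ∀ i, 0 ≤ lam i := fun i => hρ.eigenvalues_nonneg i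
  have hcnn : ∀ i a b, 0 ≤ c i a b := fun i a b => Complex.normSq_nonneg _
  have hc1 : ∀ i, ∑ a, ∑ b, c i a b = 1 := by
    intro i
    have hC : (↑(∑ a, ∑ b, c i a b) : ℂ) = 1 := by
      push_cast
      calc ∑ a, ∑ b, (c i a b : ℂ)
          = ∑ a, ∑ b, star (S i a b) * S i a b := by
            refine Finset.sum_congr rfl fun a _ => Finset.sum_congr rfl fun b _ => ?_
            rw [hns2]
        _ = ∑ j, star (evec hH i j) * evec hH i j := prod_parseval hA hB _
        _ = 1 := by rw [herm_ortho hH i i]; simp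
    exact_mod_cast hC
  have hc2 : ∀ a b, ∑ i, c i a b = 1 := by
    intro a b
    have hw1 : ∑ j : Fin m × Fin n, star (evec hA a j.1 * evec hB b j.2) *
        (evec hA a j.1 * evec hB b j.2) = 1 := by
      rw [Fintype.sum_prod_type]
      calc ∑ j1, ∑ j2, star (evec hA a ((j1, j2) : Fin m × Fin n).1 * evec hB b ((j1, j2) : Fin m × Fin n).2) *
            (evec hA a ((j1, j2) : Fin m × Fin n).1 * evec hB b ((j1, j2) : Fin m × Fin n).2)
          = ∑ j1, (star (evec hA a j1) * evec hA a j1) * ∑ j2, star (evec hB b j2) * evec hB b j2 := by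
            refine Finset.sum_congr rfl fun j1 _ => ?_
            rw [Finset.mul_sum]
            refine Finset.sum_congr rfl fun j2 _ => ?_
            simp only [star_mul']
            ring
        _ = (∑ j1, star (evec hA a j1) * evec hA a j1) * ∑ j2, star (evec hB b j2) * evec hB b j2 := by
            rw [← Finset.sum_mul]
        _ = 1 := by rw [herm_ortho hA a a, herm_ortho hB b b]; simp
    have hC : (↑(∑ i, c i a b) : ℂ) = 1 := by
      push_cast
      calc ∑ i, (c i a b : ℂ)
          = ∑ i, star (∑ k : Fin m × Fin n, star (evec hH i k) * (evec hA a k.1 * evec hB b k.2)) *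
              (∑ k : Fin m × Fin n, star (evec hH i k) * (evec hA a k.1 * evec hB b k.2)) := by
            refine Finset.sum_congr rfl fun i _ => (hstar_eq i a b).symm
        _ = ∑ j : Fin m × Fin n, star (evec hA a j.1 * evec hB b j.2) * (evec hA a j.1 * evec hB b j.2) :=
            herm_parseval hH _
        _ = 1 := hw1
    exact_mod_cast hC
  have hsl : ∑ i, lam i = 1 := by
    have h1 : (1 : ℂ) = ∑ i, (lam i : ℂ) := hρ1 ▸ herm_trace hH
    exact_mod_cast h1.symm
  have hquad : ∀ a b, ∑ i, (lam i : ℂ) * (c i a b : ℂ)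
      = ∑ j, ∑ k, star (evec hA a j.1 * evec hB b j.2) * (ρ j k * (evec hA a k.1 * evec hB b k.2)) := by
    intro a b
    rw [herm_quadform hH (fun k : Fin m × Fin n => evec hA a k.1 * evec hB b k.2)]
    refine Finset.sum_congr rfl fun i _ => ?_
    rw [hstar_eq i a b]
  have hqa : ∀ a, ∑ b, ∑ i, lam i * c i a b = alp a := by
    intro a
    have hC : (↑(∑ b, ∑ i, lam i * c i a b) : ℂ) = (alp a : ℂ) := by
      push_cast
      calc ∑ b, ∑ i, (lam i : ℂ) * (c i a b : ℂ)
          = ∑ b, ∑ j, ∑ k, star (evec hA a j.1 * evec hB b j.2) *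
              (ρ j k * (evec hA a k.1 * evec hB b k.2)) :=
            Finset.sum_congr rfl fun b _ => hquad a b
        _ = (alp a : ℂ) := partialA hA hB (fun i j => rfl) a
    exact_mod_cast hC
  have hqb : ∀ b, ∑ a, ∑ i, lam i * c i a b = bet b := by
    intro b
    have hC : (↑(∑ a, ∑ i, lam i * c i a b) : ℂ) = (bet b : ℂ) := by
      push_cast
      calc ∑ a, ∑ i, (lam i : ℂ) * (c i a b : ℂ)
          = ∑ a, ∑ j, ∑ k, star (evec hA a j.1 * evec hB b j.2) *
              (ρ j k * (evec hA a k.1 * evec hB b k.2)) :=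
            Finset.sum_congr rfl fun a _ => hquad a b
        _ = (bet b : ℂ) := partialB hA hB (fun s t => rfl) b
    exact_mod_cast hC
  have main := core_ineq lam alp bet c hlam hcnn hc1 hc2 hsl hqa hqb
  simp only [vnEntropy, dif_pos hH, dif_pos hA, dif_pos hB]
  exact main
end

section
/- For Hermitian d×d matrices A and B, Tr(exp(A+B)) ≤ Tr(exp(A) exp(B)). (Golden–Thompson inequality.) -/
open Matrix
open scoped ComplexOrder

variable {d : ℕ}

private lemma gt_mul_pow (X Y : Matrix (Fin d) (Fin d) ℂ) (n : ℕ) :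
    (X*Y)^(n+1) = X * ((Y*X)^n * Y) := by
  induction n with
  | zero => simp [mul_assoc]
  | succ n ih =>
    rw [pow_succ, ih, pow_succ]
    noncomm_ring

private lemma gt_cycle (X Y : Matrix (Fin d) (Fin d) ℂ) (m : ℕ) :
    ((X*Y)^m).trace = ((Y*X)^m).trace := by
  cases m with
  | zero => simp
  | succ n => rw [gt_mul_pow, trace_mul_comm, mul_assoc, ← pow_succ]

private lemma gt_ip_nonneg (X : Matrix (Fin d) (Fin d) ℂ) : 0 ≤ (Xᴴ*X).trace := by
  rw [Matrix.trace]
  refine Finset.sum_nonneg fun i _ => ?_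
  rw [diag_apply, mul_apply]
  refine Finset.sum_nonneg fun j _ => ?_
  simpa [conjTranspose_apply] using star_mul_self_nonneg (X j i)

private lemma gt_trace_eq_inner (X Y : Matrix (Fin d) (Fin d) ℂ) :
    (Xᴴ*Y).trace = inner (𝕜 := ℂ)
      (show EuclideanSpace ℂ (Fin d × Fin d) from WithLp.toLp 2 (fun p : Fin d × Fin d => X p.1 p.2))
      (show EuclideanSpace ℂ (Fin d × Fin d) from WithLp.toLp 2 (fun p : Fin d × Fin d => Y p.1 p.2)) := by
  rw [Matrix.trace, PiLp.inner_apply]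
  simp only [diag_apply, mul_apply, conjTranspose_apply]
  rw [Fintype.sum_prod_type, Finset.sum_comm]
  simp [RCLike.inner_apply, mul_comm]

private lemma gt_CS (X Y : Matrix (Fin d) (Fin d) ℂ) :
    ‖(Xᴴ*Y).trace‖ ≤
      Real.sqrt (((Xᴴ*X).trace).re) * Real.sqrt (((Yᴴ*Y).trace).re) := by
  set v : EuclideanSpace ℂ (Fin d × Fin d) := WithLp.toLp 2 (fun p : Fin d × Fin d => X p.1 p.2) with hv
  set w : EuclideanSpace ℂ (Fin d × Fin d) := WithLp.toLp 2 (fun p : Fin d × Fin d => Y p.1 p.2) with hw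
  rw [gt_trace_eq_inner X Y, gt_trace_eq_inner X X, gt_trace_eq_inner Y Y]
  rw [← hv, ← hw]
  have h2 : (inner (𝕜 := ℂ) v v).re = ‖v‖^2 := by
    exact inner_self_eq_norm_sq (𝕜 := ℂ) v
  have h3 : (inner (𝕜 := ℂ) w w).re = ‖w‖^2 := by
    exact inner_self_eq_norm_sq (𝕜 := ℂ) w
  rw [h2, h3, Real.sqrt_sq (norm_nonneg v), Real.sqrt_sq (norm_nonneg w)]
  exact norm_inner_le_norm v w

private lemma gt_re_nonneg {z : ℂ} (h : 0 ≤ z) : 0 ≤ z.re := by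
  simpa using (Complex.le_def.mp h).1

private lemma gt_abs_of_nonneg {z : ℂ} (h : 0 ≤ z) : ‖z‖ = z.re := by
  have him : z.im = 0 := by simpa using (Complex.le_def.mp h).2.symm
  have : z = (z.re : ℂ) := Complex.ext rfl (by simp [him])
  rw [this, Complex.norm_real, Complex.ofReal_re, Real.norm_eq_abs]
  exact abs_of_nonneg (gt_re_nonneg h)

private lemma gt_psd_trace_nonneg {M : Matrix (Fin d) (Fin d) ℂ} (hM : M.PosSemidef) :
    0 ≤ M.trace := by
  obtain ⟨B, rfl⟩ := (by open scoped MatrixOrder in exact CStarAlgebra.nonneg_iff_eq_star_mul_self.mp hM.nonneg)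
  exact gt_ip_nonneg B

private lemma gt_trace_mul_psd_nonneg {U V : Matrix (Fin d) (Fin d) ℂ}
    (hU : U.PosSemidef) (hV : V.PosSemidef) : 0 ≤ (U*V).trace := by
  obtain ⟨B, rfl⟩ := (by open scoped MatrixOrder in exact CStarAlgebra.nonneg_iff_eq_star_mul_self.mp hU.nonneg)
  rw [mul_assoc, trace_mul_comm]
  exact gt_psd_trace_nonneg (hV.mul_mul_conjTranspose_same B)

private lemma gt_PQ (k : ℕ) :
    (∀ C : Matrix (Fin d) (Fin d) ℂ,
      ((C^(2^k) * (Cᴴ)^(2^k)).trace).re ≤ (((C*Cᴴ)^(2^k)).trace).re) ∧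
    (∀ U V : Matrix (Fin d) (Fin d) ℂ, U.PosSemidef → V.PosSemidef →
      ‖((U*V)^(2^k)).trace‖ ≤ ((U^(2^k) * V^(2^k)).trace).re) := by
  induction k with
  | zero =>
    refine ⟨fun C => by simp, fun U V hU hV => ?_⟩
    simp only [pow_zero, pow_one]
    rw [gt_abs_of_nonneg (gt_trace_mul_psd_nonneg hU hV)]
  | succ k ih =>
    obtain ⟨P, Q⟩ := ih
    set m := 2^k with hmdef
    have hm : 2^(k+1) = m + m := by rw [pow_succ, mul_two]
    have h2m : 2*m = 2^(k+1) := by rw [pow_succ, Nat.mul_comm]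
    have hpow : ∀ W : Matrix (Fin d) (Fin d) ℂ, (W*W)^m = W^(2^(k+1)) := fun W => by
      rw [← pow_two, ← pow_mul, h2m]
    have sqrt_mul_self' : ∀ t : ℝ, 0 ≤ t → Real.sqrt t * Real.sqrt t = t := fun t ht =>
      Real.mul_self_sqrt ht
    constructor
    · -- P (k+1)
      intro C
      have hCm : C^(2^(k+1)) = (C^2)^m := by rw [← pow_mul, h2m]
      have hCHm : (Cᴴ)^(2^(k+1)) = ((C^2)ᴴ)^m := by
        rw [conjTranspose_pow, ← pow_mul, h2m]
      have hUpsd : (C*Cᴴ).PosSemidef := posSemidef_self_mul_conjTranspose C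
      have hVpsd : (Cᴴ*C).PosSemidef := posSemidef_conjTranspose_mul_self C
      have hX : ((C*Cᴴ)^m)ᴴ = (C*Cᴴ)^m := (hUpsd.pow m).1
      have hY : ((Cᴴ*C)^m)ᴴ = (Cᴴ*C)^m := (hVpsd.pow m).1
      have ht : 0 ≤ ((C*Cᴴ)^m * (C*Cᴴ)^m).trace := by
        have := gt_ip_nonneg ((C*Cᴴ)^m); rwa [hX] at this
      calc ((C^(2^(k+1)) * (Cᴴ)^(2^(k+1))).trace).re
          ≤ (((C^2*(C^2)ᴴ)^m).trace).re := by rw [hCm, hCHm]; exact P (C^2)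
        _ = ((((C*Cᴴ)*(Cᴴ*C))^m).trace).re := by
            have h1 : C^2*(C^2)ᴴ = C*(C*Cᴴ*Cᴴ) := by rw [conjTranspose_pow]; noncomm_ring
            have h2 : (C*Cᴴ*Cᴴ)*C = (C*Cᴴ)*(Cᴴ*C) := by noncomm_ring
            rw [h1, gt_cycle, h2]
        _ ≤ (((C*Cᴴ)^m * (Cᴴ*C)^m).trace).re :=
            le_trans (Complex.re_le_norm _) (Q _ _ hUpsd hVpsd)
        _ ≤ Real.sqrt ((((C*Cᴴ)^m * (C*Cᴴ)^m).trace).re) *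
              Real.sqrt ((((Cᴴ*C)^m * (Cᴴ*C)^m).trace).re) := by
            have hcs := gt_CS ((C*Cᴴ)^m) ((Cᴴ*C)^m)
            rw [hX, hY] at hcs
            exact le_trans (Complex.re_le_norm _) hcs
        _ = (((C*Cᴴ)^(2^(k+1))).trace).re := by
            have e1 : ((Cᴴ*C)^m*(Cᴴ*C)^m).trace = ((C*Cᴴ)^m*(C*Cᴴ)^m).trace := by
              rw [← pow_add, ← pow_add, gt_cycle]
            rw [congrArg Complex.re e1, sqrt_mul_self' _ (gt_re_nonneg ht),
              ← pow_add, ← hm]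
    · -- Q (k+1)
      intro U V hU hV
      have hH : (U*V)ᴴ = V*U := by rw [conjTranspose_mul, hU.1, hV.1]
      have hXH : ((V*U)^m)ᴴ = (U*V)^m := by
        rw [conjTranspose_pow, conjTranspose_mul, hU.1, hV.1]
      have hYH : ((U*V)^m)ᴴ = (V*U)^m := by rw [conjTranspose_pow, hH]
      have hUU : (U*U).PosSemidef := by rw [← pow_two]; exact hU.pow 2
      have hVV : (V*V).PosSemidef := by rw [← pow_two]; exact hV.pow 2
      have ht : 0 ≤ ((U*V)^m * (V*U)^m).trace := by
        have := gt_ip_nonneg ((V*U)^m); rwa [hXH] at this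
      calc ‖((U*V)^(2^(k+1))).trace‖
          = ‖(((V*U)^m)ᴴ * (U*V)^m).trace‖ := by rw [hXH, ← pow_add, ← hm]
        _ ≤ Real.sqrt (((((V*U)^m)ᴴ*(V*U)^m).trace).re) *
              Real.sqrt (((((U*V)^m)ᴴ*(U*V)^m).trace).re) := gt_CS _ _
        _ = (((U*V)^m * (V*U)^m).trace).re := by
            rw [hXH, hYH,
              show ((V*U)^m*(U*V)^m).trace = ((U*V)^m*(V*U)^m).trace from
                trace_mul_comm _ _]
            exact sqrt_mul_self' _ (gt_re_nonneg ht)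
        _ ≤ ((((U*V)*(V*U))^m).trace).re := by
            have hP := P (U*V); rw [hH] at hP; exact hP
        _ = ((((U*U)*(V*V))^m).trace).re := by
            have h1 : (U*V)*(V*U) = U*(V*V*U) := by noncomm_ring
            have h2 : (V*V*U)*U = (V*V)*(U*U) := by noncomm_ring
            rw [h1, gt_cycle, h2, gt_cycle]
        _ ≤ (((U*U)^m * (V*V)^m).trace).re :=
            le_trans (Complex.re_le_norm _) (Q _ _ hUU hVV)
        _ = ((U^(2^(k+1)) * V^(2^(k+1))).trace).re := by rw [hpow, hpow]

open NormedSpace Topology Filter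

section Banach
variable {𝔸 : Type*} [NormedRing 𝔸] [NormedAlgebra ℂ 𝔸] [CompleteSpace 𝔸] [NormOneClass 𝔸]

private lemma gt_norm_pow_le (x : 𝔸) (n : ℕ) : ‖x^n‖ ≤ ‖x‖^n := by
  cases n with
  | zero => simp
  | succ n => exact norm_pow_le' x n.succ_pos

private lemma gt_real_exp_tsum (r : ℝ) : ∑' n : ℕ, (n.factorial : ℝ)⁻¹ * r^n = Real.exp r := by
  rw [Real.exp_eq_exp_ℝ, exp_eq_tsum ℝ]
  simp [smul_eq_mul]

private lemma gt_summable (r : ℝ) : Summable (fun n : ℕ => (n.factorial : ℝ)⁻¹ * r^n) := by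
  have := expSeries_summable' (𝕂 := ℝ) r
  simpa [smul_eq_mul] using this

private lemma gt_norm_exp_le (x : 𝔸) : ‖exp x‖ ≤ Real.exp ‖x‖ := by
  rw [exp_eq_tsum ℂ]
  refine le_trans (norm_tsum_le_tsum_norm (norm_expSeries_summable' x)) ?_
  rw [← gt_real_exp_tsum ‖x‖]
  refine Summable.tsum_le_tsum (fun n => ?_) (norm_expSeries_summable' x) (gt_summable _)
  rw [norm_smul]
  simp only [norm_inv, Complex.norm_natCast]
  exact mul_le_mul_of_nonneg_left (gt_norm_pow_le x n) (by positivity)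

private lemma gt_exp_remainder {x : 𝔸} (hx : ‖x‖ ≤ 1) :
    ‖exp x - 1 - x‖ ≤ ‖x‖^2 * Real.exp 1 := by
  have hs : Summable (fun n : ℕ => ((n.factorial :ℂ))⁻¹ • x ^ n) := expSeries_summable' x
  have h1 : exp x - 1 - x = ∑' n : ℕ, (((n+2).factorial : ℂ))⁻¹ • x^(n+2) := by
    have h2 := Summable.sum_add_tsum_nat_add (f := fun n : ℕ => ((n.factorial : ℂ))⁻¹ • x^n) 2 hs
    simp only [Finset.sum_range_succ, Finset.sum_range_zero, Nat.factorial,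
      Nat.cast_one, inv_one, one_smul, pow_zero, pow_one, zero_add] at h2
    rw [exp_eq_tsum ℂ]
    show (∑' n : ℕ, ((n.factorial : ℂ))⁻¹ • x ^ n) - 1 - x = _
    rw [← h2]
    have : ∀ i : ℕ, ((i + 1).succ * (i.succ * i.factorial)) = (i+2).factorial := by
      intro i; simp [Nat.factorial_succ]
    simp only [this]
    norm_num
    abel
  rw [h1]
  have hsn : Summable (fun n : ℕ => ‖(((n+2).factorial : ℂ))⁻¹ • x^(n+2)‖) :=
    (summable_nat_add_iff 2).mpr (norm_expSeries_summable' x)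
  refine le_trans (norm_tsum_le_tsum_norm hsn) ?_
  have hbound : ∀ n : ℕ, ‖(((n+2).factorial : ℂ))⁻¹ • x^(n+2)‖ ≤
      ‖x‖^2 * ((n.factorial : ℝ)⁻¹ * 1^n) := by
    intro n
    rw [norm_smul, norm_inv, Complex.norm_natCast, one_pow, mul_one]
    have h2 : ‖x^(n+2)‖ ≤ ‖x‖^2 := by
      refine le_trans (gt_norm_pow_le x (n+2)) ?_
      calc ‖x‖^(n+2) = ‖x‖^n * ‖x‖^2 := by ring
        _ ≤ 1 * ‖x‖^2 := by
            have := pow_le_one₀ (norm_nonneg x) hx (n := n)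
            exact mul_le_mul_of_nonneg_right this (by positivity)
        _ = ‖x‖^2 := one_mul _
    have h3 : ((n+2).factorial : ℝ)⁻¹ ≤ (n.factorial : ℝ)⁻¹ := by
      apply inv_anti₀
      · positivity
      · exact_mod_cast Nat.factorial_le (by omega)
    calc ((n+2).factorial : ℝ)⁻¹ * ‖x^(n+2)‖ ≤ (n.factorial : ℝ)⁻¹ * ‖x‖^2 :=
          mul_le_mul h3 h2 (norm_nonneg _) (by positivity)
      _ = ‖x‖^2 * (n.factorial : ℝ)⁻¹ := by ring
  refine le_trans (Summable.tsum_le_tsum hbound hsn ((gt_summable 1).mul_left _)) ?_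
  rw [tsum_mul_left, gt_real_exp_tsum 1]

private lemma gt_pow_sub_pow {M : ℝ} (hM : 1 ≤ M) {U V : 𝔸}
    (hU : ‖U‖ ≤ M) (hV : ‖V‖ ≤ M) (n : ℕ) :
    ‖U^n - V^n‖ ≤ n * M^n * ‖U - V‖ := by
  induction n with
  | zero => simp
  | succ n ih =>
    have key : U^(n+1) - V^(n+1) = U * (U^n - V^n) + (U - V) * V^n := by
      rw [pow_succ', pow_succ']; noncomm_ring
    have hM0 : (0:ℝ) ≤ M := le_trans zero_le_one hM
    have h1 : ‖U*(U^n-V^n)‖ ≤ M * (n*M^n*‖U-V‖) :=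
      le_trans (norm_mul_le _ _) (mul_le_mul hU ih (norm_nonneg _) hM0)
    have h2 : ‖(U-V)*V^n‖ ≤ ‖U-V‖ * M^n :=
      le_trans (norm_mul_le _ _)
        (mul_le_mul_of_nonneg_left
          (le_trans (gt_norm_pow_le V n) (pow_le_pow_left₀ (norm_nonneg V) hV n))
          (norm_nonneg _))
    have h3 : M^n ≤ M^(n+1) := pow_le_pow_right₀ hM (Nat.le_succ n)
    calc ‖U^(n+1) - V^(n+1)‖ ≤ ‖U*(U^n-V^n)‖ + ‖(U-V)*V^n‖ := key ▸ norm_add_le _ _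
      _ ≤ M * (n*M^n*‖U-V‖) + ‖U-V‖ * M^n := add_le_add h1 h2
      _ = ↑n * M^(n+1) * ‖U-V‖ + ‖U-V‖ * M^n := by rw [pow_succ]; ring
      _ ≤ ↑n * M^(n+1) * ‖U-V‖ + M^(n+1) * ‖U-V‖ := by
          have h5 : ‖U-V‖ * M^n ≤ M^(n+1) * ‖U-V‖ := by
            rw [pow_succ]
            nlinarith [mul_nonneg (mul_nonneg (sub_nonneg.mpr hM) (pow_nonneg hM0 n))
              (norm_nonneg (U-V))]
          linarith
      _ = (↑(n+1) : ℝ) * M^(n+1) * ‖U-V‖ := by push_cast; ring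

set_option maxHeartbeats 1000000 in
private lemma gt_trotter_step {x y : 𝔸} (h : ‖x‖ + ‖y‖ ≤ 1) :
    ‖exp x * exp y - exp (x+y)‖ ≤ 7 * Real.exp 1 ^ 2 * (‖x‖ + ‖y‖)^2 := by
  have hp0 : (0:ℝ) ≤ ‖x‖ := norm_nonneg x
  have hq0 : (0:ℝ) ≤ ‖y‖ := norm_nonneg y
  have hp1 : ‖x‖ ≤ 1 := by linarith
  have hq1 : ‖y‖ ≤ 1 := by linarith
  have hs1 : ‖x + y‖ ≤ 1 := le_trans (norm_add_le x y) h
  have he1 : (1:ℝ) ≤ Real.exp 1 := by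
    have := Real.add_one_le_exp (1:ℝ); linarith
  set r1 := exp x - 1 - x with hr1
  set r2 := exp y - 1 - y with hr2
  set r3 := exp (x+y) - 1 - (x+y) with hr3
  have e1 : exp x = 1 + x + r1 := by rw [hr1]; abel
  have e2 : exp y = 1 + y + r2 := by rw [hr2]; abel
  have e3 : exp (x+y) = 1 + (x+y) + r3 := by rw [hr3]; abel
  have key : exp x * exp y - exp (x+y) =
      x*y + x*r2 + r1*y + r1*r2 + r1 + r2 - r3 := by
    rw [e1, e2, e3]; noncomm_ring
  have hb1 : ‖r1‖ ≤ ‖x‖^2 * Real.exp 1 := gt_exp_remainder hp1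
  have hb2 : ‖r2‖ ≤ ‖y‖^2 * Real.exp 1 := gt_exp_remainder hq1
  have hb3 : ‖r3‖ ≤ ‖x+y‖^2 * Real.exp 1 := gt_exp_remainder hs1
  have hb3' : ‖r3‖ ≤ (‖x‖+‖y‖)^2 * Real.exp 1 := by
    refine le_trans hb3 (mul_le_mul_of_nonneg_right ?_ (Real.exp_pos 1).le)
    have := norm_add_le x y
    nlinarith [norm_nonneg (x+y)]
  set p := ‖x‖; set q := ‖y‖; set e := Real.exp 1
  have he0 : (0:ℝ) ≤ e := (Real.exp_pos 1).le
  have hnorm : ‖exp x * exp y - exp (x+y)‖ ≤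
      p*q + p*(q^2*e) + (p^2*e)*q + (p^2*e)*(q^2*e) + p^2*e + q^2*e + (p+q)^2*e := by
    rw [key]
    have n1 : ‖x*y‖ ≤ p*q := norm_mul_le x y
    have n2 : ‖x*r2‖ ≤ p*(q^2*e) :=
      le_trans (norm_mul_le _ _) (mul_le_mul_of_nonneg_left hb2 hp0)
    have n3 : ‖r1*y‖ ≤ (p^2*e)*q :=
      le_trans (norm_mul_le _ _) (mul_le_mul_of_nonneg_right hb1 hq0)
    have n4 : ‖r1*r2‖ ≤ (p^2*e)*(q^2*e) :=
      le_trans (norm_mul_le _ _) (mul_le_mul hb1 hb2 (norm_nonneg _) (by positivity))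
    calc ‖x*y + x*r2 + r1*y + r1*r2 + r1 + r2 - r3‖
        ≤ ‖x*y + x*r2 + r1*y + r1*r2 + r1 + r2‖ + ‖r3‖ := norm_sub_le _ _
      _ ≤ ‖x*y + x*r2 + r1*y + r1*r2 + r1‖ + ‖r2‖ + ‖r3‖ := by
          gcongr; exact norm_add_le _ _
      _ ≤ ‖x*y + x*r2 + r1*y + r1*r2‖ + ‖r1‖ + ‖r2‖ + ‖r3‖ := by
          gcongr; exact norm_add_le _ _
      _ ≤ ‖x*y + x*r2 + r1*y‖ + ‖r1*r2‖ + ‖r1‖ + ‖r2‖ + ‖r3‖ := by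
          gcongr; exact norm_add_le _ _
      _ ≤ ‖x*y + x*r2‖ + ‖r1*y‖ + ‖r1*r2‖ + ‖r1‖ + ‖r2‖ + ‖r3‖ := by
          gcongr; exact norm_add_le _ _
      _ ≤ ‖x*y‖ + ‖x*r2‖ + ‖r1*y‖ + ‖r1*r2‖ + ‖r1‖ + ‖r2‖ + ‖r3‖ := by
          gcongr; exact norm_add_le _ _
      _ ≤ p*q + p*(q^2*e) + (p^2*e)*q + (p^2*e)*(q^2*e) + p^2*e + q^2*e + (p+q)^2*e := by
          gcongr
  refine le_trans hnorm ?_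
  have h1e : (1:ℝ) ≤ e^2 := by nlinarith
  have hee : e ≤ e^2 := by nlinarith
  have hs2 : (0:ℝ) ≤ (p+q)^2 := sq_nonneg _
  have he2 : (0:ℝ) ≤ e^2 := sq_nonneg _
  have c1 : p*q ≤ (p+q)^2 := by nlinarith
  have c2 : p*q^2 ≤ (p+q)^2 := by nlinarith
  have c3 : p^2*q ≤ (p+q)^2 := by nlinarith
  have hpq1 : p*q ≤ 1 := mul_le_one₀ hp1 hq0 hq1
  have c4 : p^2*q^2 ≤ (p+q)^2 := by nlinarith [mul_nonneg hp0 hq0, hpq1, c1]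
  have c5 : p^2 ≤ (p+q)^2 := by nlinarith
  have c6 : q^2 ≤ (p+q)^2 := by nlinarith
  have lift : ∀ a : ℝ, a ≤ (p+q)^2 → a*e ≤ (p+q)^2*e^2 := fun a ha =>
    le_trans (mul_le_mul_of_nonneg_right ha he0)
      (mul_le_mul_of_nonneg_left hee hs2)
  have b1 : p*q ≤ (p+q)^2*e^2 := le_trans c1 (le_mul_of_one_le_right hs2 h1e)
  have b2 : (p*q^2)*e ≤ (p+q)^2*e^2 := lift _ c2
  have b3 : (p^2*q)*e ≤ (p+q)^2*e^2 := lift _ c3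
  have b4 : (p^2*q^2)*e^2 ≤ (p+q)^2*e^2 := mul_le_mul_of_nonneg_right c4 he2
  have b5 : p^2*e ≤ (p+q)^2*e^2 := lift _ c5
  have b6 : q^2*e ≤ (p+q)^2*e^2 := lift _ c6
  have b7 : (p+q)^2*e ≤ (p+q)^2*e^2 := lift _ le_rfl
  calc p*q + p*(q^2*e) + (p^2*e)*q + (p^2*e)*(q^2*e) + p^2*e + q^2*e + (p+q)^2*e
      = (p*q) + (p*q^2)*e + (p^2*q)*e + (p^2*q^2)*e^2 + p^2*e + q^2*e + (p+q)^2*e := by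
        ring
    _ ≤ 7 * e^2 * (p+q)^2 := by linarith

private lemma gt_trotter (x y : 𝔸) :
    Filter.Tendsto (fun n : ℕ => (exp ((n:ℂ)⁻¹ • x) * exp ((n:ℂ)⁻¹ • y))^n)
      Filter.atTop (𝓝 (exp (x+y))) := by
  set c := ‖x‖ + ‖y‖ with hc
  have hc0 : 0 ≤ c := by positivity
  rw [tendsto_iff_norm_sub_tendsto_zero]
  have hK : Filter.Tendsto (fun n : ℕ => (7 * Real.exp 1 ^ 2 * Real.exp c * c^2) / n)
      Filter.atTop (𝓝 0) := tendsto_const_div_atTop_nhds_zero_nat _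
  refine squeeze_zero' (Filter.Eventually.of_forall fun n => norm_nonneg _) ?_ hK
  filter_upwards [Filter.eventually_ge_atTop (max 1 (Nat.ceil c))] with n hn
  have hn1 : 1 ≤ n := le_trans (le_max_left _ _) hn
  have hn0 : (0:ℝ) < n := by exact_mod_cast hn1
  have hcn : c ≤ n := le_trans (Nat.le_ceil c) (by exact_mod_cast le_trans (le_max_right _ _) hn)
  set P := (n:ℂ)⁻¹ • x with hP
  set Q := (n:ℂ)⁻¹ • y with hQ
  have hnreal : ∀ z : 𝔸, ‖(n:ℂ)⁻¹ • z‖ = ‖z‖ / n := fun z => by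
    rw [norm_smul, norm_inv, Complex.norm_natCast, inv_mul_eq_div]
  have hPQ : ‖P‖ + ‖Q‖ = c / n := by rw [hP, hQ, hnreal, hnreal, hc]; ring
  have hPQ1 : ‖P‖ + ‖Q‖ ≤ 1 := by rw [hPQ]; exact div_le_one_of_le₀ hcn hn0.le
  have hsum : P + Q = (n:ℂ)⁻¹ • (x + y) := by rw [hP, hQ, smul_add]
  set Z := exp ((n:ℂ)⁻¹ • (x+y)) with hZ
  have hstep : ‖exp P * exp Q - Z‖ ≤ 7 * Real.exp 1 ^ 2 * (c/n)^2 := by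
    have := gt_trotter_step hPQ1
    rw [hsum, hPQ, ← hZ] at this
    exact this
  have hZn : Z^n = exp (x+y) := by
    letI : NormedAlgebra ℚ 𝔸 := NormedAlgebra.restrictScalars ℚ ℂ 𝔸
    rw [hZ, ← NormedSpace.exp_nsmul, ← Nat.cast_smul_eq_nsmul ℂ, smul_smul,
      mul_inv_cancel₀ (by exact_mod_cast hn0.ne'), one_smul]
  set M := Real.exp (c/n) with hM
  have hM1 : 1 ≤ M := Real.one_le_exp (by positivity)
  have hXY : ‖exp P * exp Q‖ ≤ M := by
    refine le_trans (norm_mul_le _ _) ?_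
    have h1 := gt_norm_exp_le P
    have h2 := gt_norm_exp_le Q
    calc ‖exp P‖ * ‖exp Q‖ ≤ Real.exp ‖P‖ * Real.exp ‖Q‖ :=
          mul_le_mul h1 h2 (norm_nonneg _) (Real.exp_pos _).le
      _ = M := by rw [← Real.exp_add, hPQ, hM]
  have hZle : ‖Z‖ ≤ M := by
    refine le_trans (gt_norm_exp_le _) ?_
    rw [hM]
    refine Real.exp_le_exp.mpr ?_
    rw [hnreal]
    gcongr
    exact norm_add_le x y
  have hMn : M^n = Real.exp c := by
    rw [hM, ← Real.exp_nat_mul]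
    congr 1
    field_simp
  calc ‖(exp P * exp Q)^n - exp (x+y)‖
      = ‖(exp P * exp Q)^n - Z^n‖ := by rw [hZn]
    _ ≤ n * M^n * ‖exp P * exp Q - Z‖ := gt_pow_sub_pow hM1 hXY hZle n
    _ ≤ n * M^n * (7 * Real.exp 1 ^ 2 * (c/n)^2) := by
        refine mul_le_mul_of_nonneg_left hstep ?_
        positivity
    _ = (7 * Real.exp 1 ^ 2 * Real.exp c * c^2) / n := by
        rw [hMn]
        field_simp
end Banach


open NormedSpace in
/-- **Golden–Thompson inequality**: for Hermitian matrices `A`, `B`,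
`Tr(exp(A+B)) ≤ Tr(exp A · exp B)`. -/
theorem stmt_18 (d : ℕ) (A B : Matrix (Fin d) (Fin d) ℂ)
    (hA : A.IsHermitian) (hB : B.IsHermitian) :
    (NormedSpace.exp (A + B)).trace ≤
      ((NormedSpace.exp A) * (NormedSpace.exp B)).trace := by
  rcases Nat.eq_zero_or_pos d with hd | hd
  · subst hd
    simp [Matrix.trace]
  haveI : Nonempty (Fin d) := ⟨⟨0, hd⟩⟩
  letI : SeminormedRing (Matrix (Fin d) (Fin d) ℂ) := Matrix.linftyOpSemiNormedRing
  letI : NormedRing (Matrix (Fin d) (Fin d) ℂ) := Matrix.linftyOpNormedRing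
  letI : NormedAlgebra ℂ (Matrix (Fin d) (Fin d) ℂ) := Matrix.linftyOpNormedAlgebra
  letI : NormOneClass (Matrix (Fin d) (Fin d) ℂ) := Matrix.linfty_opNormOneClass
  -- exp of a Hermitian matrix is Hermitian
  have hexp_herm : ∀ M : Matrix (Fin d) (Fin d) ℂ, M.IsHermitian →
      (exp M).IsHermitian := fun M hM => by
    rw [Matrix.IsHermitian, ← Matrix.exp_conjTranspose, hM]
  have hherm_smul : ∀ (r : ℝ) (M : Matrix (Fin d) (Fin d) ℂ), M.IsHermitian →
      ((r:ℂ) • M).IsHermitian := fun r M hM => by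
    rw [Matrix.IsHermitian, Matrix.conjTranspose_smul, hM]
    congr 1
    simp
  -- exp of a Hermitian matrix is positive semidefinite
  have hexp_psd : ∀ M : Matrix (Fin d) (Fin d) ℂ, M.IsHermitian →
      (exp M).PosSemidef := by
    intro M hM
    have h2 : ((2:ℂ)⁻¹ • M).IsHermitian := by
      have := hherm_smul (2⁻¹ : ℝ) M hM
      rwa [Complex.ofReal_inv, Complex.ofReal_ofNat] at this
    have hsm : (2:ℕ) • ((2:ℂ)⁻¹ • M) = M := by
      rw [← Nat.cast_smul_eq_nsmul ℂ, smul_smul]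
      norm_num
    have he : exp M = (exp ((2:ℂ)⁻¹ • M))ᴴ * exp ((2:ℂ)⁻¹ • M) := by
      rw [hexp_herm _ h2, ← pow_two, ← Matrix.exp_nsmul, hsm]
    rw [he]
    exact Matrix.posSemidef_conjTranspose_mul_self _
  -- the key per-level inequality
  have main : ∀ k : ℕ,
      ‖((exp ((((2^k : ℕ)):ℂ)⁻¹ • A) *
          exp ((((2^k : ℕ)):ℂ)⁻¹ • B))^(2^k)).trace‖ ≤
        ((exp A * exp B).trace).re := by
    intro k
    have hn0 : (((2^k : ℕ)):ℂ) ≠ 0 := by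
      exact_mod_cast (Nat.pos_of_ne_zero (fun h => by simpa [h] using (pow_pos
        (show 0 < 2 by norm_num) k).ne')).ne'
    have hA' : (((2^k : ℕ):ℂ)⁻¹ • A).IsHermitian := by
      have := hherm_smul ((2^k : ℕ):ℝ)⁻¹ A hA
      rwa [Complex.ofReal_inv, Complex.ofReal_natCast] at this
    have hB' : (((2^k : ℕ):ℂ)⁻¹ • B).IsHermitian := by
      have := hherm_smul ((2^k : ℕ):ℝ)⁻¹ B hB
      rwa [Complex.ofReal_inv, Complex.ofReal_natCast] at this
    have hS := hexp_psd _ hA'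
    have hT := hexp_psd _ hB'
    have hQk := (gt_PQ k).2 _ _ hS hT
    have hpow : ∀ M : Matrix (Fin d) (Fin d) ℂ,
        (exp ((((2^k : ℕ)):ℂ)⁻¹ • M))^(2^k) = exp M := fun M => by
      rw [← Matrix.exp_nsmul, ← Nat.cast_smul_eq_nsmul ℂ, smul_smul,
        mul_inv_cancel₀ hn0, one_smul]
    rwa [hpow A, hpow B] at hQk
  -- convergence of traces
  have h2k : Filter.Tendsto (fun k : ℕ => 2^k) Filter.atTop Filter.atTop :=
    tendsto_pow_atTop_atTop_of_one_lt (by norm_num)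
  have htr : Continuous (fun M : Matrix (Fin d) (Fin d) ℂ => M.trace) := by
    show Continuous fun M : Matrix (Fin d) (Fin d) ℂ => ∑ i, M i i
    exact continuous_finset_sum _ fun i _ =>
      (continuous_apply i).comp (continuous_apply i)
  have hlim : Filter.Tendsto
      (fun k : ℕ => (((exp ((((2^k : ℕ)):ℂ)⁻¹ • A) *
          exp ((((2^k : ℕ)):ℂ)⁻¹ • B))^(2^k)).trace).re)
      Filter.atTop (𝓝 (((exp (A+B)).trace).re)) := by
    have h1 := gt_trotter A B
    have h3 := h1.comp h2k
    exact (Complex.continuous_re.tendsto _).comp ((htr.tendsto _).comp h3)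
  have hle : ((exp (A+B)).trace).re ≤ ((exp A * exp B).trace).re :=
    le_of_tendsto hlim (Filter.Eventually.of_forall fun k =>
      le_trans (Complex.re_le_norm _) (main k))
  -- imaginary parts vanish
  have him1 : ((exp (A+B)).trace).im = 0 := by
    have h := hexp_herm (A+B) (hA.add hB)
    have h2 := congrArg Matrix.trace h
    rw [Matrix.trace_conjTranspose] at h2
    exact Complex.conj_eq_iff_im.mp h2
  have him2 : ((exp A * exp B).trace).im = 0 := by
    have hstar : star ((exp A * exp B).trace) = (exp A * exp B).trace := by
      rw [← Matrix.trace_conjTranspose, Matrix.conjTranspose_mul,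
        hexp_herm A hA, hexp_herm B hB, Matrix.trace_mul_comm]
    exact Complex.conj_eq_iff_im.mp hstar
  rw [Complex.le_def]
  exact ⟨hle, by rw [him1, him2]⟩
end

section
/- Let ρ_{ABC} be a density matrix on ℂ^a ⊗ ℂ^b ⊗ ℂ^c of the form ρ_{ABC} = ⊕_j q_j ρ_j ⊗ ω_j, where ℂ^b decomposes as an orthogonal direct sum ⊕_j (ℂ^{b_j^L} ⊗ ℂ^{b_j^R}), each ρ_j is a density matrix on ℂ^a ⊗ ℂ^{b_j^L}, each ω_j is a density matrix on ℂ^{b_j^R} ⊗ ℂ^c, and (q_j) is a probability distribution. Then strong subadditivity holds with equality: S(ρ_{AB}) + S(ρ_{BC}) = S(ρ_B) + S(ρ_{ABC}). -/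
open Matrix Polynomial
open scoped ComplexOrder Kronecker

noncomputable def entf (s : ℝ) : ℝ := -(s * Real.log s)

lemma entf_mul {x y : ℝ} (hx : 0 ≤ x) (hy : 0 ≤ y) :
    entf (x * y) = x * entf y + y * entf x := by
  rcases eq_or_lt_of_le hx with h | h
  · simp [entf, ← h]
  rcases eq_or_lt_of_le hy with h' | h'
  · simp [entf, ← h']
  · unfold entf; rw [Real.log_mul h.ne' h'.ne']; ring

lemma charmatrix_eq {n R : Type*} [DecidableEq n] [Fintype n] [CommRing R] (M : Matrix n n R) :
    charmatrix M = Matrix.diagonal (fun _ => (X : R[X])) - M.map C := by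
  ext i j
  rw [charmatrix_apply]
  simp [Matrix.sub_apply]

lemma charpoly_conj_of_mul_eq_one {n : Type*} [Fintype n] [DecidableEq n]
    {U A V : Matrix n n ℂ} (hUV : U * V = 1) : (U * A * V).charpoly = A.charpoly := by
  have hmap : (U.map C) * (V.map C) = 1 := by
    rw [← Matrix.map_mul, hUV, Matrix.map_one _ (map_zero C) (map_one C)]
  have h1 : charmatrix (U * A * V) = (U.map C) * charmatrix A * (V.map C) := by
    rw [charmatrix_eq, charmatrix_eq, Matrix.mul_sub, Matrix.sub_mul]
    congr 1
    · rw [← Matrix.smul_one_eq_diagonal, Matrix.mul_smul, mul_one, Matrix.smul_mul, hmap]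
    · rw [Matrix.map_mul, Matrix.map_mul]
  rw [Matrix.charpoly, Matrix.charpoly, h1, Matrix.det_mul, Matrix.det_mul,
    mul_comm (Matrix.det _), mul_assoc, ← Matrix.det_mul, hmap, Matrix.det_one, mul_one]

lemma charpoly_diagonal {n : Type*} [Fintype n] [DecidableEq n] (v : n → ℂ) :
    (Matrix.diagonal v).charpoly = ∏ i, (X - C (v i)) := by
  have h : charmatrix (Matrix.diagonal v) = Matrix.diagonal (fun i => (X - C (v i))) := by
    ext i j
    by_cases h : i = j
    · subst h; simp [charmatrix_apply]
    · simp [charmatrix_apply, Matrix.diagonal_apply_ne _ h, h]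
  rw [Matrix.charpoly, h, Matrix.det_diagonal]

lemma charpoly_of_isHermitian {n : Type*} [Fintype n] [DecidableEq n]
    {A : Matrix n n ℂ} (hA : A.IsHermitian) :
    A.charpoly = ∏ i, (X - C ((hA.eigenvalues i : ℂ))) := by
  conv_lhs => rw [hA.spectral_theorem, Unitary.conjStarAlgAut_apply]
  rw [charpoly_conj_of_mul_eq_one (Matrix.mem_unitaryGroup_iff.mp (hA.eigenvectorUnitary).2),
    _root_.charpoly_diagonal]
  rfl

lemma sum_eigenvalues_eq_one {n : Type*} [Fintype n] [DecidableEq n]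
    {A : Matrix n n ℂ} (hA : A.IsHermitian) (h1 : A.trace = 1) :
    ∑ i, hA.eigenvalues i = 1 := by
  have ht : A.trace = ∑ i, ((hA.eigenvalues i : ℝ) : ℂ) := by
    conv_lhs => rw [hA.spectral_theorem, Unitary.conjStarAlgAut_apply]
    rw [Matrix.trace_mul_comm, ← mul_assoc,
      Matrix.mem_unitaryGroup_iff'.mp (hA.eigenvectorUnitary).2, one_mul,
      Matrix.trace_diagonal]
    rfl
  have := ht.symm.trans h1
  have h2 := congrArg Complex.re this
  simpa using h2

lemma vnEntropy_eq_of_charpoly {n κ : Type*} [Fintype n] [DecidableEq n] [Fintype κ]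
    {A : Matrix n n ℂ} (hA : A.IsHermitian) (d : κ → ℝ)
    (hd : A.charpoly = ∏ i, (X - C ((d i : ℂ)))) :
    vnEntropy A = ∑ i, entf (d i) := by
  have hroots : Multiset.map (fun i => ((hA.eigenvalues i : ℝ) : ℂ)) Finset.univ.val =
      Multiset.map (fun i => ((d i : ℝ) : ℂ)) Finset.univ.val := by
    have e1 := Polynomial.roots_multiset_prod_X_sub_C
      (Multiset.map (fun i => ((hA.eigenvalues i : ℝ) : ℂ)) Finset.univ.val)
    have e2 := Polynomial.roots_multiset_prod_X_sub_C
      (Multiset.map (fun i => ((d i : ℝ) : ℂ)) Finset.univ.val)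
    rw [Multiset.map_map] at e1 e2
    simp only [Function.comp] at e1 e2
    have hp : A.charpoly = (Multiset.map (fun i => X - C ((hA.eigenvalues i : ℝ) : ℂ)) Finset.univ.val).prod := by
      rw [charpoly_of_isHermitian hA, Finset.prod_eq_multiset_prod]
    have hq : A.charpoly = (Multiset.map (fun i => X - C ((d i : ℝ) : ℂ)) Finset.univ.val).prod := by
      rw [hd, Finset.prod_eq_multiset_prod]
    rw [← e1, ← e2, ← hp, ← hq]
  have key : ∑ i, entf (hA.eigenvalues i) = ∑ i, entf (d i) := by
    have h1 := congrArg (fun s => (Multiset.map (fun z : ℂ => entf z.re) s).sum) hroots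
    simp only [Multiset.map_map, Function.comp, Complex.ofReal_re] at h1
    exact h1
  rw [vnEntropy, dif_pos hA, ← key, ← Finset.sum_neg_distrib]
  rfl
lemma kronecker_isHermitian {m n : Type*} {A : Matrix m m ℂ} {B : Matrix n n ℂ}
    (hA : A.IsHermitian) (hB : B.IsHermitian) : (A ⊗ₖ B).IsHermitian := by
  ext ⟨i, j⟩ ⟨k, l⟩
  simp only [Matrix.conjTranspose_apply, Matrix.kroneckerMap_apply, star_mul']
  rw [mul_comm, ← Matrix.conjTranspose_apply A, ← Matrix.conjTranspose_apply B, hA, hB]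
  exact mul_comm _ _

lemma smul_kronecker_isHermitian {m n : Type*} (w : ℝ) {A : Matrix m m ℂ} {B : Matrix n n ℂ}
    (hA : A.IsHermitian) (hB : B.IsHermitian) : ((w : ℂ) • (A ⊗ₖ B)).IsHermitian := by
  have h := kronecker_isHermitian hA hB
  rw [Matrix.IsHermitian, Matrix.conjTranspose_smul, h]
  norm_num

lemma smul_kronecker_eq_conj {m n : Type*} [Fintype m] [DecidableEq m] [Fintype n] [DecidableEq n]
    (w : ℝ) {A : Matrix m m ℂ} {B : Matrix n n ℂ}
    (hA : A.IsHermitian) (hB : B.IsHermitian) :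
    (w : ℂ) • (A ⊗ₖ B) =
      ((hA.eigenvectorUnitary : Matrix m m ℂ) ⊗ₖ (hB.eigenvectorUnitary : Matrix n n ℂ)) *
        Matrix.diagonal (fun p : m × n =>
          ((w * hA.eigenvalues p.1 * hB.eigenvalues p.2 : ℝ) : ℂ)) *
      ((star (hA.eigenvectorUnitary : Matrix m m ℂ)) ⊗ₖ
        (star (hB.eigenvectorUnitary : Matrix n n ℂ))) := by
  have hD : Matrix.diagonal (fun p : m × n =>
      ((w * hA.eigenvalues p.1 * hB.eigenvalues p.2 : ℝ) : ℂ)) =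
      (w : ℂ) • ((Matrix.diagonal (RCLike.ofReal ∘ hA.eigenvalues)) ⊗ₖ
        (Matrix.diagonal (RCLike.ofReal ∘ hB.eigenvalues))) := by
    rw [Matrix.diagonal_kronecker_diagonal, ← Matrix.diagonal_smul]
    apply congrArg Matrix.diagonal
    funext p
    simp only [Pi.smul_apply, Function.comp, smul_eq_mul, RCLike.ofReal, Complex.coe_algebraMap]
    push_cast
    ring
  rw [hD, Matrix.mul_smul, Matrix.smul_mul, ← Matrix.mul_kronecker_mul,
    ← Matrix.mul_kronecker_mul]
  conv_lhs => rw [hA.spectral_theorem, hB.spectral_theorem, Unitary.conjStarAlgAut_apply,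
    Unitary.conjStarAlgAut_apply]

lemma charpoly_smul_kronecker {m n : Type*} [Fintype m] [DecidableEq m] [Fintype n] [DecidableEq n]
    (w : ℝ) {A : Matrix m m ℂ} {B : Matrix n n ℂ}
    (hA : A.IsHermitian) (hB : B.IsHermitian) :
    ((w : ℂ) • (A ⊗ₖ B)).charpoly =
      ∏ p : m × n, (X - C ((w * hA.eigenvalues p.1 * hB.eigenvalues p.2 : ℝ) : ℂ)) := by
  rw [smul_kronecker_eq_conj w hA hB, charpoly_conj_of_mul_eq_one, _root_.charpoly_diagonal]
  rw [← Matrix.mul_kronecker_mul,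
    Matrix.mem_unitaryGroup_iff.mp (hA.eigenvectorUnitary).2,
    Matrix.mem_unitaryGroup_iff.mp (hB.eigenvectorUnitary).2,
    Matrix.one_kronecker_one]
noncomputable def ptSnd {m c : Type*} [Fintype c] (M : Matrix (m × c) (m × c) ℂ) :
    Matrix m m ℂ :=
  Matrix.of fun r r' => ∑ k, M (r, k) (r', k)

noncomputable def ptFst {a m : Type*} [Fintype a] (M : Matrix (a × m) (a × m) ℂ) :
    Matrix m m ℂ :=
  Matrix.of fun l l' => ∑ i, M (i, l) (i, l')

lemma ptSnd_posSemidef {m c : Type*} [Fintype m] [Fintype c]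
    {M : Matrix (m × c) (m × c) ℂ} (hM : M.PosSemidef) : (ptSnd M).PosSemidef := by
  classical
  obtain ⟨B, rfl⟩ : ∃ B : Matrix (m × c) (m × c) ℂ, M = Bᴴ * B := by
    open scoped MatrixOrder in exact CStarAlgebra.nonneg_iff_eq_star_mul_self.mp hM.nonneg
  have h : ptSnd (Bᴴ * B) =
      (Matrix.of fun (pk : (m × c) × c) (r : m) => B pk.1 (r, pk.2))ᴴ *
      (Matrix.of fun (pk : (m × c) × c) (r : m) => B pk.1 (r, pk.2)) := by
    ext r r'
    simp only [ptSnd, Matrix.of_apply, Matrix.mul_apply, Matrix.conjTranspose_apply,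
      Fintype.sum_prod_type]
    rw [Finset.sum_comm]
    exact Finset.sum_congr rfl fun _ _ => Finset.sum_comm
  rw [h]
  exact Matrix.posSemidef_conjTranspose_mul_self _

lemma ptFst_posSemidef {a m : Type*} [Fintype a] [Fintype m]
    {M : Matrix (a × m) (a × m) ℂ} (hM : M.PosSemidef) : (ptFst M).PosSemidef := by
  classical
  obtain ⟨B, rfl⟩ : ∃ B : Matrix (a × m) (a × m) ℂ, M = Bᴴ * B := by
    open scoped MatrixOrder in exact CStarAlgebra.nonneg_iff_eq_star_mul_self.mp hM.nonneg
  have h : ptFst (Bᴴ * B) =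
      (Matrix.of fun (pi : (a × m) × a) (l : m) => B pi.1 (pi.2, l))ᴴ *
      (Matrix.of fun (pi : (a × m) × a) (l : m) => B pi.1 (pi.2, l)) := by
    ext l l'
    simp only [ptFst, Matrix.of_apply, Matrix.mul_apply, Matrix.conjTranspose_apply,
      Fintype.sum_prod_type]
    rw [Finset.sum_comm]
    exact Finset.sum_congr rfl fun _ _ => Finset.sum_comm
  rw [h]
  exact Matrix.posSemidef_conjTranspose_mul_self _

lemma ptSnd_trace {m c : Type*} [Fintype m] [Fintype c]
    (M : Matrix (m × c) (m × c) ℂ) : (ptSnd M).trace = M.trace := by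
  simp [ptSnd, Matrix.trace, Matrix.diag, Fintype.sum_prod_type]

lemma ptFst_trace {a m : Type*} [Fintype a] [Fintype m]
    (M : Matrix (a × m) (a × m) ℂ) : (ptFst M).trace = M.trace := by
  simp only [ptFst, Matrix.trace, Matrix.diag, Matrix.of_apply, Fintype.sum_prod_type]
  rw [Finset.sum_comm]
lemma vnEntropy_structured {t : ℕ} {m n : Fin t → Type*}
    [∀ j, Fintype (m j)] [∀ j, DecidableEq (m j)] [∀ j, Fintype (n j)] [∀ j, DecidableEq (n j)]
    (w : Fin t → ℝ) (P : ∀ j, Matrix (m j) (m j) ℂ) (Q : ∀ j, Matrix (n j) (n j) ℂ)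
    (hP : ∀ j, (P j).IsHermitian) (hQ : ∀ j, (Q j).IsHermitian)
    {ι : Type*} [Fintype ι] [DecidableEq ι] (e : ι ≃ Σ j, m j × n j)
    (M : Matrix ι ι ℂ)
    (hM : M = (Matrix.reindex e.symm e.symm)
      (Matrix.blockDiagonal' (fun j => (w j : ℂ) • ((P j) ⊗ₖ (Q j))))) :
    vnEntropy M = ∑ j, ∑ p : m j × n j,
      entf (w j * (hP j).eigenvalues p.1 * (hQ j).eigenvalues p.2) := by
  have hherm : M.IsHermitian := by
    have hfn : (fun j => ((w j : ℂ) • ((P j) ⊗ₖ (Q j)))ᴴ) =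
        fun j => (w j : ℂ) • ((P j) ⊗ₖ (Q j)) :=
      funext fun j => smul_kronecker_isHermitian (w j) (hP j) (hQ j)
    rw [hM, Matrix.IsHermitian, Matrix.conjTranspose_reindex,
      Matrix.blockDiagonal'_conjTranspose, hfn]
  have hd : M.charpoly = ∏ q : Σ j, m j × n j,
      (X - C (((fun q : Σ j, m j × n j =>
        w q.1 * (hP q.1).eigenvalues q.2.1 * (hQ q.1).eigenvalues q.2.2) q : ℝ) : ℂ)) := by
    rw [hM, Matrix.charpoly_reindex]
    have hblocks : (fun j => (w j : ℂ) • ((P j) ⊗ₖ (Q j))) = fun j =>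
        (((hP j).eigenvectorUnitary : Matrix (m j) (m j) ℂ) ⊗ₖ
          ((hQ j).eigenvectorUnitary : Matrix (n j) (n j) ℂ)) *
        Matrix.diagonal (fun p : m j × n j =>
          ((w j * (hP j).eigenvalues p.1 * (hQ j).eigenvalues p.2 : ℝ) : ℂ)) *
        ((star ((hP j).eigenvectorUnitary : Matrix (m j) (m j) ℂ)) ⊗ₖ
          (star ((hQ j).eigenvectorUnitary : Matrix (n j) (n j) ℂ))) := by
      funext j
      exact smul_kronecker_eq_conj (w j) (hP j) (hQ j)
    rw [hblocks]
    rw [Matrix.blockDiagonal'_mul, Matrix.blockDiagonal'_mul]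
    have hUV : Matrix.blockDiagonal' (fun j =>
          (((hP j).eigenvectorUnitary : Matrix (m j) (m j) ℂ) ⊗ₖ
            ((hQ j).eigenvectorUnitary : Matrix (n j) (n j) ℂ))) *
        Matrix.blockDiagonal' (fun j =>
          ((star ((hP j).eigenvectorUnitary : Matrix (m j) (m j) ℂ)) ⊗ₖ
            (star ((hQ j).eigenvectorUnitary : Matrix (n j) (n j) ℂ)))) = 1 := by
      rw [← Matrix.blockDiagonal'_mul]
      rw [show (fun j =>
          (((hP j).eigenvectorUnitary : Matrix (m j) (m j) ℂ) ⊗ₖ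
            ((hQ j).eigenvectorUnitary : Matrix (n j) (n j) ℂ)) *
          ((star ((hP j).eigenvectorUnitary : Matrix (m j) (m j) ℂ)) ⊗ₖ
            (star ((hQ j).eigenvectorUnitary : Matrix (n j) (n j) ℂ)))) =
          fun j => (1 : Matrix (m j × n j) (m j × n j) ℂ) from ?_]
      · exact Matrix.blockDiagonal'_one
      · funext j
        rw [← Matrix.mul_kronecker_mul,
          Matrix.mem_unitaryGroup_iff.mp ((hP j).eigenvectorUnitary).2,
          Matrix.mem_unitaryGroup_iff.mp ((hQ j).eigenvectorUnitary).2,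
          Matrix.one_kronecker_one]
    rw [charpoly_conj_of_mul_eq_one hUV, Matrix.blockDiagonal'_diagonal, _root_.charpoly_diagonal]
  rw [vnEntropy_eq_of_charpoly hherm _ hd, Finset.sum_sigma']
  rfl
lemma sum_entf_prod {m n : Type*} [Fintype m] [Fintype n] {w : ℝ} (hw : 0 ≤ w)
    {lam : m → ℝ} {mu : n → ℝ} (hlam : ∀ i, 0 ≤ lam i) (hmu : ∀ k, 0 ≤ mu k)
    (hlam1 : ∑ i, lam i = 1) (hmu1 : ∑ k, mu k = 1) :
    ∑ p : m × n, entf (w * lam p.1 * mu p.2) =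
      entf w + w * (∑ i, entf (lam i)) + w * (∑ k, entf (mu k)) := by
  have step : ∀ (i : m) (k : n), entf (w * lam i * mu k) =
      (w * lam i) * entf (mu k) + ((w * entf (lam i)) * mu k + (entf w * lam i) * mu k) := by
    intro i k
    rw [entf_mul (mul_nonneg hw (hlam i)) (hmu k), entf_mul hw (hlam i)]
    ring
  rw [Fintype.sum_prod_type]
  simp_rw [step, Finset.sum_add_distrib, ← Finset.sum_mul_sum]
  simp only [← Finset.mul_sum]
  simp only [hlam1, hmu1, mul_one, one_mul]
  ring

/-- If a density matrix `ρ_ABC` on `ℂ^a ⊗ ℂ^b ⊗ ℂ^c` is of the form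
`⊕_j w_j ρ_j ⊗ ω_j` along an orthogonal direct sum decomposition
`ℂ^b = ⊕_j (ℂ^{bL_j} ⊗ ℂ^{bR_j})` of the middle factor (the middle index set being
`Σ j, Fin (bL j) × Fin (bR j)`), with `ρ_j` density matrices on `ℂ^a ⊗ ℂ^{bL_j}`,
`ω_j` density matrices on `ℂ^{bR_j} ⊗ ℂ^c`, and `(w_j)` a probability distribution, then
strong subadditivity holds with equality: `S(ρ_AB) + S(ρ_BC) = S(ρ_B) + S(ρ_ABC)`. -/
theorem stmt_19 (a c t : ℕ) (bL bR : Fin t → ℕ)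
    (w : Fin t → ℝ) (hw : ∀ j, 0 ≤ w j) (hw1 : ∑ j, w j = 1)
    (ρ : ∀ j : Fin t, Matrix (Fin a × Fin (bL j)) (Fin a × Fin (bL j)) ℂ)
    (ω : ∀ j : Fin t, Matrix (Fin (bR j) × Fin c) (Fin (bR j) × Fin c) ℂ)
    (hρ : ∀ j, (ρ j).PosSemidef) (hρ1 : ∀ j, (ρ j).trace = 1)
    (hω : ∀ j, (ω j).PosSemidef) (hω1 : ∀ j, (ω j).trace = 1)
    (ρABC : Matrix (Fin a × (Σ j : Fin t, Fin (bL j) × Fin (bR j)) × Fin c)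
                   (Fin a × (Σ j : Fin t, Fin (bL j) × Fin (bR j)) × Fin c) ℂ)
    (hABC : ∀ (i i' : Fin a) (k k' : Fin c) (j j' : Fin t)
        (l : Fin (bL j)) (r : Fin (bR j)) (l' : Fin (bL j')) (r' : Fin (bR j')),
        ρABC (i, ⟨j, l, r⟩, k) (i', ⟨j', l', r'⟩, k') =
          if h : j = j' then
            (w j : ℂ) * ρ j (i, l) (i', Fin.cast (congrArg bL h.symm) l') *
              ω j (r, k) (Fin.cast (congrArg bR h.symm) r', k')
          else 0) :
    vnEntropy (Matrix.of
        fun (p p' : Fin a × (Σ j : Fin t, Fin (bL j) × Fin (bR j))) =>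
          ∑ k, ρABC (p.1, p.2, k) (p'.1, p'.2, k)) +
    vnEntropy (Matrix.of
        fun (p p' : (Σ j : Fin t, Fin (bL j) × Fin (bR j)) × Fin c) =>
          ∑ i, ρABC (i, p.1, p.2) (i, p'.1, p'.2)) =
    vnEntropy (Matrix.of
        fun (s s' : Σ j : Fin t, Fin (bL j) × Fin (bR j)) =>
          ∑ i, ∑ k, ρABC (i, s, k) (i, s', k)) +
    vnEntropy ρABC := by
  classical
  -- Hermitian / PSD data
  have hρH : ∀ j, (ρ j).IsHermitian := fun j => (hρ j).1
  have hωH : ∀ j, (ω j).IsHermitian := fun j => (hω j).1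
  have hptρ : ∀ j, (ptFst (ρ j)).PosSemidef := fun j => ptFst_posSemidef (hρ j)
  have hptω : ∀ j, (ptSnd (ω j)).PosSemidef := fun j => ptSnd_posSemidef (hω j)
  -- equivalences
  let eABC : (Fin a × (Σ j : Fin t, Fin (bL j) × Fin (bR j)) × Fin c) ≃
      Σ j : Fin t, (Fin a × Fin (bL j)) × (Fin (bR j) × Fin c) :=
    { toFun := fun p => ⟨p.2.1.1, (p.1, p.2.1.2.1), (p.2.1.2.2, p.2.2)⟩
      invFun := fun q => (q.2.1.1, ⟨q.1, (q.2.1.2, q.2.2.1)⟩, q.2.2.2)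
      left_inv := fun ⟨i, ⟨j, l, r⟩, k⟩ => rfl
      right_inv := fun ⟨j, (i, l), (r, k)⟩ => rfl }
  let eAB : (Fin a × (Σ j : Fin t, Fin (bL j) × Fin (bR j))) ≃
      Σ j : Fin t, (Fin a × Fin (bL j)) × (Fin (bR j)) :=
    { toFun := fun p => ⟨p.2.1, (p.1, p.2.2.1), p.2.2.2⟩
      invFun := fun q => (q.2.1.1, ⟨q.1, (q.2.1.2, q.2.2)⟩)
      left_inv := fun ⟨i, ⟨j, l, r⟩⟩ => rfl
      right_inv := fun ⟨j, (i, l), r⟩ => rfl }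
  let eBC : ((Σ j : Fin t, Fin (bL j) × Fin (bR j)) × Fin c) ≃
      Σ j : Fin t, (Fin (bL j)) × (Fin (bR j) × Fin c) :=
    { toFun := fun p => ⟨p.1.1, p.1.2.1, (p.1.2.2, p.2)⟩
      invFun := fun q => (⟨q.1, (q.2.1, q.2.2.1)⟩, q.2.2.2)
      left_inv := fun ⟨⟨j, l, r⟩, k⟩ => rfl
      right_inv := fun ⟨j, l, (r, k)⟩ => rfl }
  let eB : (Σ j : Fin t, Fin (bL j) × Fin (bR j)) ≃
      Σ j : Fin t, (Fin (bL j)) × (Fin (bR j)) := Equiv.refl _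
  -- matrix identities
  have hMABC : ρABC = (Matrix.reindex eABC.symm eABC.symm)
      (Matrix.blockDiagonal' (fun j => (w j : ℂ) • ((ρ j) ⊗ₖ (ω j)))) := by
    ext ⟨i, ⟨j, l, r⟩, k⟩ ⟨i', ⟨j', l', r'⟩, k'⟩
    rw [hABC i i' k k' j j' l r l' r']
    show _ = Matrix.blockDiagonal' (fun j => (w j : ℂ) • ((ρ j) ⊗ₖ (ω j)))
      ⟨j, ((i, l), (r, k))⟩ ⟨j', ((i', l'), (r', k'))⟩
    rw [Matrix.blockDiagonal'_apply']
    by_cases h : j = j'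
    · subst h
      rw [dif_pos rfl, dif_pos rfl, cast_eq]
      show (w j : ℂ) * ρ j (i, l) (i', l') * ω j (r, k) (r', k') =
        ((w j : ℂ) • ((ρ j) ⊗ₖ (ω j))) ((i, l), (r, k)) ((i', l'), (r', k'))
      rw [Matrix.smul_apply, Matrix.kroneckerMap_apply, smul_eq_mul, mul_assoc]
    · rw [dif_neg h, dif_neg h]
  have hMAB : (Matrix.of
        fun (p p' : Fin a × (Σ j : Fin t, Fin (bL j) × Fin (bR j))) =>
          ∑ k, ρABC (p.1, p.2, k) (p'.1, p'.2, k)) =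
      (Matrix.reindex eAB.symm eAB.symm)
      (Matrix.blockDiagonal' (fun j => (w j : ℂ) • ((ρ j) ⊗ₖ (ptSnd (ω j))))) := by
    ext ⟨i, ⟨j, l, r⟩⟩ ⟨i', ⟨j', l', r'⟩⟩
    show (∑ k, ρABC (i, ⟨j, l, r⟩, k) (i', ⟨j', l', r'⟩, k)) =
      Matrix.blockDiagonal' (fun j => (w j : ℂ) • ((ρ j) ⊗ₖ (ptSnd (ω j))))
        ⟨j, ((i, l), r)⟩ ⟨j', ((i', l'), r')⟩
    rw [Matrix.blockDiagonal'_apply']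
    by_cases h : j = j'
    · subst h
      rw [dif_pos rfl, cast_eq]
      have hsum : ∀ k : Fin c, ρABC (i, ⟨j, l, r⟩, k) (i', ⟨j, l', r'⟩, k) =
          (w j : ℂ) * ρ j (i, l) (i', l') * ω j (r, k) (r', k) := by
        intro k
        rw [hABC i i' k k j j l r l' r', dif_pos rfl]
        rfl
      rw [Finset.sum_congr rfl (fun k _ => hsum k), ← Finset.mul_sum,
        Matrix.smul_apply, Matrix.kroneckerMap_apply, smul_eq_mul, ← mul_assoc]
      rfl
    · rw [dif_neg h]
      calc (∑ k, ρABC (i, ⟨j, l, r⟩, k) (i', ⟨j', l', r'⟩, k)) = ∑ _k : Fin c, (0 : ℂ) :=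
            Finset.sum_congr rfl fun k _ => by
              rw [hABC i i' k k j j' l r l' r', dif_neg h]
        _ = 0 := Finset.sum_const_zero
  have hMBC : (Matrix.of
        fun (p p' : (Σ j : Fin t, Fin (bL j) × Fin (bR j)) × Fin c) =>
          ∑ i, ρABC (i, p.1, p.2) (i, p'.1, p'.2)) =
      (Matrix.reindex eBC.symm eBC.symm)
      (Matrix.blockDiagonal' (fun j => (w j : ℂ) • ((ptFst (ρ j)) ⊗ₖ (ω j)))) := by
    ext ⟨⟨j, l, r⟩, k⟩ ⟨⟨j', l', r'⟩, k'⟩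
    show (∑ i, ρABC (i, ⟨j, l, r⟩, k) (i, ⟨j', l', r'⟩, k')) =
      Matrix.blockDiagonal' (fun j => (w j : ℂ) • ((ptFst (ρ j)) ⊗ₖ (ω j)))
        ⟨j, (l, (r, k))⟩ ⟨j', (l', (r', k'))⟩
    rw [Matrix.blockDiagonal'_apply']
    by_cases h : j = j'
    · subst h
      rw [dif_pos rfl, cast_eq]
      have hsum : ∀ i : Fin a, ρABC (i, ⟨j, l, r⟩, k) (i, ⟨j, l', r'⟩, k') =
          (w j : ℂ) * ρ j (i, l) (i, l') * ω j (r, k) (r', k') := by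
        intro i
        rw [hABC i i k k' j j l r l' r', dif_pos rfl]
        rfl
      have hfac : ∀ i : Fin a, (w j : ℂ) * ρ j (i, l) (i, l') * ω j (r, k) (r', k') =
          ((w j : ℂ) * ω j (r, k) (r', k')) * ρ j (i, l) (i, l') := fun i => by ring
      rw [Finset.sum_congr rfl (fun i _ => (hsum i).trans (hfac i)), ← Finset.mul_sum,
        Matrix.smul_apply, Matrix.kroneckerMap_apply, smul_eq_mul]
      show ((w j : ℂ) * ω j (r, k) (r', k')) * (∑ i, ρ j (i, l) (i, l')) =
        (w j : ℂ) * ((ptFst (ρ j)) l l' * ω j (r, k) (r', k'))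
      rw [show (ptFst (ρ j)) l l' = ∑ i, ρ j (i, l) (i, l') from rfl]
      ring
    · rw [dif_neg h]
      calc (∑ i, ρABC (i, ⟨j, l, r⟩, k) (i, ⟨j', l', r'⟩, k')) = ∑ _i : Fin a, (0 : ℂ) :=
            Finset.sum_congr rfl fun i _ => by
              rw [hABC i i k k' j j' l r l' r', dif_neg h]
        _ = 0 := Finset.sum_const_zero
  have hMB : (Matrix.of
        fun (s s' : Σ j : Fin t, Fin (bL j) × Fin (bR j)) =>
          ∑ i, ∑ k, ρABC (i, s, k) (i, s', k)) =
      (Matrix.reindex eB.symm eB.symm)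
      (Matrix.blockDiagonal' (fun j => (w j : ℂ) • ((ptFst (ρ j)) ⊗ₖ (ptSnd (ω j))))) := by
    ext ⟨j, l, r⟩ ⟨j', l', r'⟩
    show (∑ i, ∑ k, ρABC (i, ⟨j, l, r⟩, k) (i, ⟨j', l', r'⟩, k)) =
      Matrix.blockDiagonal' (fun j => (w j : ℂ) • ((ptFst (ρ j)) ⊗ₖ (ptSnd (ω j))))
        ⟨j, (l, r)⟩ ⟨j', (l', r')⟩
    rw [Matrix.blockDiagonal'_apply']
    by_cases h : j = j'
    · subst h
      rw [dif_pos rfl, cast_eq]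
      have hsum : ∀ (i : Fin a) (k : Fin c), ρABC (i, ⟨j, l, r⟩, k) (i, ⟨j, l', r'⟩, k) =
          (w j : ℂ) * ρ j (i, l) (i, l') * ω j (r, k) (r', k) := by
        intro i k
        rw [hABC i i k k j j l r l' r', dif_pos rfl]
        rfl
      have hin : ∀ i : Fin a, (∑ k, ρABC (i, ⟨j, l, r⟩, k) (i, ⟨j, l', r'⟩, k)) =
          ((w j : ℂ) * (∑ k, ω j (r, k) (r', k))) * ρ j (i, l) (i, l') := by
        intro i
        rw [Finset.sum_congr rfl (fun k _ => hsum i k), ← Finset.mul_sum]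
        ring
      rw [Finset.sum_congr rfl (fun i _ => hin i), ← Finset.mul_sum,
        Matrix.smul_apply, Matrix.kroneckerMap_apply, smul_eq_mul]
      show ((w j : ℂ) * (∑ k, ω j (r, k) (r', k))) * (∑ i, ρ j (i, l) (i, l')) =
        (w j : ℂ) * ((ptFst (ρ j)) l l' * (ptSnd (ω j)) r r')
      rw [show (ptFst (ρ j)) l l' = ∑ i, ρ j (i, l) (i, l') from rfl,
        show (ptSnd (ω j)) r r' = ∑ k, ω j (r, k) (r', k) from rfl]
      ring
    · rw [dif_neg h]
      calc (∑ i, ∑ k, ρABC (i, ⟨j, l, r⟩, k) (i, ⟨j', l', r'⟩, k))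
          = ∑ _i : Fin a, ∑ _k : Fin c, (0 : ℂ) :=
            Finset.sum_congr rfl fun i _ => Finset.sum_congr rfl fun k _ => by
              rw [hABC i i k k j j' l r l' r', dif_neg h]
        _ = 0 := by simp
  -- entropies via the structure theorem
  have SABC := vnEntropy_structured w ρ ω hρH hωH eABC ρABC hMABC
  have SAB := vnEntropy_structured w ρ (fun j => ptSnd (ω j)) hρH
    (fun j => (hptω j).1) eAB _ hMAB
  have SBC := vnEntropy_structured w (fun j => ptFst (ρ j)) ω
    (fun j => (hptρ j).1) hωH eBC _ hMBC
  have SB := vnEntropy_structured w (fun j => ptFst (ρ j)) (fun j => ptSnd (ω j))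
    (fun j => (hptρ j).1) (fun j => (hptω j).1) eB _ hMB
  rw [SAB, SBC, SB, SABC]
  -- eigenvalue data
  have hnnr : ∀ j i, 0 ≤ (hρH j).eigenvalues i := fun j => (hρ j).eigenvalues_nonneg
  have hnnw : ∀ j k, 0 ≤ (hωH j).eigenvalues k := fun j => (hω j).eigenvalues_nonneg
  have hnnpr : ∀ j i, 0 ≤ ((hptρ j).1).eigenvalues i := fun j => (hptρ j).eigenvalues_nonneg
  have hnnpw : ∀ j k, 0 ≤ ((hptω j).1).eigenvalues k := fun j => (hptω j).eigenvalues_nonneg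
  have hsρ : ∀ j, ∑ i, (hρH j).eigenvalues i = 1 :=
    fun j => sum_eigenvalues_eq_one (hρH j) (hρ1 j)
  have hsω : ∀ j, ∑ k, (hωH j).eigenvalues k = 1 :=
    fun j => sum_eigenvalues_eq_one (hωH j) (hω1 j)
  have hsptρ : ∀ j, ∑ i, ((hptρ j).1).eigenvalues i = 1 :=
    fun j => sum_eigenvalues_eq_one ((hptρ j).1) ((ptFst_trace (ρ j)).trans (hρ1 j))
  have hsptω : ∀ j, ∑ k, ((hptω j).1).eigenvalues k = 1 :=
    fun j => sum_eigenvalues_eq_one ((hptω j).1) ((ptSnd_trace (ω j)).trans (hω1 j))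
  rw [← Finset.sum_add_distrib, ← Finset.sum_add_distrib]
  refine Finset.sum_congr rfl fun j _ => ?_
  rw [sum_entf_prod (hw j) (hnnr j) (hnnpw j) (hsρ j) (hsptω j),
    sum_entf_prod (hw j) (hnnpr j) (hnnw j) (hsptρ j) (hsω j),
    sum_entf_prod (hw j) (hnnpr j) (hnnpw j) (hsptρ j) (hsptω j),
    sum_entf_prod (hw j) (hnnr j) (hnnw j) (hsρ j) (hsω j)]
  ring
end
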